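/- arXiv:2411.13462 — 7 statements merged into one kernel-verified Lean document; each statement's English description precedes it below -/
import Mathlib

section
/- Let π^X ∝ exp(-V) be a logconcave distribution on ℝⁿ such that a level set of π^X of measure m < 1 contains a ball B_r(x₀). Then the level set {x : V(x) - min V ≤ ℓn} with ℓ = 5 + 13·log(e/(1-m)) also contains B_r(x₀). -/
open MeasureTheory Set
open scoped ENNReal

noncomputable section

/-- If a level set of the logconcave distribution `π^X ∝ exp (-V)` of measure
`m < 1` contains a ball `B_r(x₀)`, then the level set `{x | V x - min V ≤ ℓ n}` with
`ℓ = 5 + 13 log (e / (1 - m))` also contains `B_r(x₀)`. -/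
theorem level_set_contains_ball (n : ℕ) (hn : 1 ≤ n)
    (V : EuclideanSpace ℝ (Fin n) → ℝ) (V₀ : ℝ)
    (hV : ConvexOn ℝ Set.univ V)
    (hmin : ∀ x, V₀ ≤ V x) (hatt : ∃ x, V x = V₀)
    (hInt : Integrable (fun x => Real.exp (-V x)))
    (πX : Measure (EuclideanSpace ℝ (Fin n)))
    (hπX : πX = ((volume.withDensity fun x => ENNReal.ofReal (Real.exp (-V x))) Set.univ)⁻¹ •
      volume.withDensity (fun x => ENNReal.ofReal (Real.exp (-V x))))
    (m : ℝ) (hm : m < 1)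
    (a : ℝ) (hma : πX {x | V x ≤ a} = ENNReal.ofReal m)
    (r : ℝ) (hr : 0 < r) (x₀ : EuclideanSpace ℝ (Fin n))
    (hball : Metric.ball x₀ r ⊆ {x | V x ≤ a}) :
    Metric.ball x₀ r ⊆
      {x | V x - V₀ ≤ (5 + 13 * Real.log (Real.exp 1 / (1 - m))) * n} := by
  classical
  obtain ⟨xs, hxs⟩ := hatt
  have hVc : Continuous V := continuousOn_univ.mp (hV.continuousOn isOpen_univ)
  set f : EuclideanSpace ℝ (Fin n) → ℝ≥0∞ := fun x => ENNReal.ofReal (Real.exp (-V x)) with hf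
  have hfmeas : Measurable f :=
    ENNReal.measurable_ofReal.comp ((Real.continuous_exp.comp hVc.neg).measurable)
  set Z : ℝ := ∫ x, Real.exp (-V x) with hZdef
  have hZpos : 0 < Z := integral_exp_pos (f := fun x => -V x) hInt
  have hlintZ : ∫⁻ x, f x = ENNReal.ofReal Z := by
    rw [hZdef, ofReal_integral_eq_lintegral_ofReal hInt
      (Filter.Eventually.of_forall fun x => (Real.exp_pos _).le)]
  have hμuniv : (volume.withDensity f) Set.univ = ENNReal.ofReal Z := by
    rw [withDensity_apply _ MeasurableSet.univ, setLIntegral_univ, hlintZ]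
  have hZne : ENNReal.ofReal Z ≠ 0 := by
    simpa [ENNReal.ofReal_eq_zero, not_le] using hZpos
  have hZtop : ENNReal.ofReal Z ≠ ⊤ := ENNReal.ofReal_ne_top
  have hπuniv : πX Set.univ = 1 := by
    rw [hπX, Measure.smul_apply, smul_eq_mul, hμuniv]
    exact ENNReal.inv_mul_cancel hZne hZtop
  have hprob : IsProbabilityMeasure πX := ⟨hπuniv⟩
  -- positivity of m
  have hm0 : 0 < m := by
    have hballμ : ENNReal.ofReal (Real.exp (-a)) * volume (Metric.ball x₀ r) ≤
        (volume.withDensity f) (Metric.ball x₀ r) := by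
      rw [withDensity_apply _ measurableSet_ball, ← setLIntegral_const]
      refine setLIntegral_mono hfmeas fun x hx => ?_
      exact ENNReal.ofReal_le_ofReal (Real.exp_le_exp.2 (neg_le_neg (hball hx)))
    have hballpos : (0:ℝ≥0∞) < (volume.withDensity f) (Metric.ball x₀ r) := by
      refine lt_of_lt_of_le ?_ hballμ
      exact ENNReal.mul_pos (by simp [Real.exp_pos]) (Metric.measure_ball_pos _ _ hr).ne'
    have hπball : (0:ℝ≥0∞) < πX (Metric.ball x₀ r) := by
      rw [hπX, Measure.smul_apply, smul_eq_mul, hμuniv]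
      exact ENNReal.mul_pos (ENNReal.inv_ne_zero.mpr hZtop) hballpos.ne'
    have : (0:ℝ≥0∞) < ENNReal.ofReal m := by
      rw [← hma]; exact lt_of_lt_of_le hπball (measure_mono hball)
    exact ENNReal.ofReal_pos.mp this
  -- key MGF bound : ∫⁻ exp(-V/2) ≤ exp(V₀/2) * 2^n * Z
  have hK : ∫⁻ x, ENNReal.ofReal (Real.exp (-V x / 2)) ≤
      ENNReal.ofReal (Real.exp (V₀ / 2)) * (ENNReal.ofReal ((2:ℝ)^n) * ENNReal.ofReal Z) := by
    have hpt : ∀ x, Real.exp (-V x / 2) ≤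
        Real.exp (V₀ / 2) * Real.exp (-V ((2:ℝ)⁻¹ • (x + xs))) := by
      intro x
      have hmid : V ((2:ℝ)⁻¹ • (x + xs)) ≤ (V x + V₀) / 2 := by
        have h2 := hV.2 (Set.mem_univ x) (Set.mem_univ xs)
          (by norm_num : (0:ℝ) ≤ (2:ℝ)⁻¹) (by norm_num : (0:ℝ) ≤ (2:ℝ)⁻¹) (by norm_num)
        rw [smul_add]
        calc V ((2:ℝ)⁻¹ • x + (2:ℝ)⁻¹ • xs) ≤ (2:ℝ)⁻¹ * V x + (2:ℝ)⁻¹ * V xs := h2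
          _ = (V x + V₀) / 2 := by rw [hxs]; ring
      rw [← Real.exp_add]
      exact Real.exp_le_exp.2 (by linarith)
    calc ∫⁻ x, ENNReal.ofReal (Real.exp (-V x / 2))
        ≤ ∫⁻ x, ENNReal.ofReal (Real.exp (V₀ / 2)) * f ((2:ℝ)⁻¹ • (x + xs)) := by
          refine lintegral_mono fun x => ?_
          rw [hf, ← ENNReal.ofReal_mul (Real.exp_pos _).le]
          exact ENNReal.ofReal_le_ofReal (hpt x)
      _ = ENNReal.ofReal (Real.exp (V₀ / 2)) * ∫⁻ x, f ((2:ℝ)⁻¹ • (x + xs)) := by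
          rw [lintegral_const_mul]
          exact hfmeas.comp ((measurable_id.add_const xs).const_smul ((2:ℝ)⁻¹))
      _ = ENNReal.ofReal (Real.exp (V₀ / 2)) * ∫⁻ x, f ((2:ℝ)⁻¹ • x) := by
          rw [lintegral_add_right_eq_self (fun y => f ((2:ℝ)⁻¹ • y)) xs]
      _ = ENNReal.ofReal (Real.exp (V₀ / 2)) * (ENNReal.ofReal ((2:ℝ)^n) * ENNReal.ofReal Z) := by
          rw [← lintegral_map hfmeas (measurable_const_smul ((2:ℝ)⁻¹)),
            Measure.map_addHaar_smul volume (by norm_num : ((2:ℝ)⁻¹) ≠ 0),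
            lintegral_smul_measure, hlintZ]
          congr 2
          rw [finrank_euclideanSpace_fin]
          rw [abs_of_nonneg (by positivity)]
          rw [← inv_pow, inv_inv]
  -- main claim : a - V₀ ≤ ℓ n
  set ℓ : ℝ := 5 + 13 * Real.log (Real.exp 1 / (1 - m)) with hldef
  suffices hsuff : a - V₀ ≤ ℓ * n by
    intro x hx
    have hxa : V x ≤ a := hball hx
    simp only [Set.mem_setOf_eq]
    linarith
  by_contra hcon
  push_neg at hcon
  set A : Set (EuclideanSpace ℝ (Fin n)) := {x | V₀ + ℓ * n < V x} with hA
  have hAmeas : MeasurableSet A := measurableSet_lt measurable_const hVc.measurable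
  have hsetmeas : MeasurableSet {x | V x ≤ a} := measurableSet_le hVc.measurable measurable_const
  -- lower bound on πX A
  have hlow : 1 - ENNReal.ofReal m ≤ πX A := by
    have hsub : {x | V x ≤ a}ᶜ ⊆ A := by
      intro x hx
      simp only [Set.mem_compl_iff, Set.mem_setOf_eq, not_le] at hx
      simp only [hA, Set.mem_setOf_eq]
      linarith
    have := measure_mono (μ := πX) hsub
    rwa [measure_compl hsetmeas (measure_ne_top πX _), hπuniv, hma] at this
  -- upper bound on πX A
  set D : ℝ := Real.exp (-(V₀ + ℓ * n) / 2) * (Real.exp (V₀ / 2) * (2:ℝ)^n) with hD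
  have hDpos : 0 < D := by positivity
  have hup : πX A ≤ ENNReal.ofReal D := by
    have hμA : (volume.withDensity f) A ≤
        ENNReal.ofReal (Real.exp (-(V₀ + ℓ * n) / 2)) *
          ∫⁻ x, ENNReal.ofReal (Real.exp (-V x / 2)) := by
      rw [withDensity_apply _ hAmeas]
      have hmeas2 : Measurable fun x => ENNReal.ofReal (Real.exp (-(V₀ + ℓ * n) / 2)) *
          ENNReal.ofReal (Real.exp (-V x / 2)) := by
        exact (ENNReal.measurable_ofReal.comp
          ((Real.continuous_exp.comp (hVc.neg.div_const 2)).measurable)).const_mul _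
      calc ∫⁻ x in A, f x
          ≤ ∫⁻ x in A, ENNReal.ofReal (Real.exp (-(V₀ + ℓ * n) / 2)) *
              ENNReal.ofReal (Real.exp (-V x / 2)) := by
            refine setLIntegral_mono hmeas2 fun x hx => ?_
            have hxA : V₀ + ℓ * n < V x := hx
            rw [hf, ← ENNReal.ofReal_mul (Real.exp_pos _).le, ← Real.exp_add]
            refine ENNReal.ofReal_le_ofReal (Real.exp_le_exp.2 ?_)
            have h9 : -V x / 2 ≤ -(V₀ + ℓ * ↑n) / 2 :=
              (div_le_div_iff_of_pos_right (by norm_num : (0:ℝ) < 2)).mpr (neg_le_neg hxA.le)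
            calc -V x = -V x / 2 + -V x / 2 := by ring
              _ ≤ -(V₀ + ℓ * ↑n) / 2 + -V x / 2 := add_le_add_left h9 _
        _ ≤ ∫⁻ x, ENNReal.ofReal (Real.exp (-(V₀ + ℓ * n) / 2)) *
              ENNReal.ofReal (Real.exp (-V x / 2)) := setLIntegral_le_lintegral _ _
        _ = ENNReal.ofReal (Real.exp (-(V₀ + ℓ * n) / 2)) *
              ∫⁻ x, ENNReal.ofReal (Real.exp (-V x / 2)) := by
            rw [lintegral_const_mul]
            exact ENNReal.measurable_ofReal.comp
              ((Real.continuous_exp.comp (hVc.neg.div_const 2)).measurable)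
    have hμA2 : (volume.withDensity f) A ≤ ENNReal.ofReal D * ENNReal.ofReal Z := by
      refine hμA.trans ?_
      calc ENNReal.ofReal (Real.exp (-(V₀ + ℓ * n) / 2)) *
            ∫⁻ x, ENNReal.ofReal (Real.exp (-V x / 2))
          ≤ ENNReal.ofReal (Real.exp (-(V₀ + ℓ * n) / 2)) *
            (ENNReal.ofReal (Real.exp (V₀ / 2)) * (ENNReal.ofReal ((2:ℝ)^n) *
              ENNReal.ofReal Z)) := by exact mul_le_mul_right hK _
        _ = ENNReal.ofReal D * ENNReal.ofReal Z := by
            rw [hD, ENNReal.ofReal_mul (Real.exp_pos _).le,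
              ENNReal.ofReal_mul (Real.exp_pos _).le, mul_assoc, mul_assoc]
    rw [hπX, Measure.smul_apply, smul_eq_mul, hμuniv]
    calc (ENNReal.ofReal Z)⁻¹ * (volume.withDensity f) A
        ≤ (ENNReal.ofReal Z)⁻¹ * (ENNReal.ofReal D * ENNReal.ofReal Z) := by
          exact mul_le_mul_right hμA2 _
      _ = ENNReal.ofReal D := by
          rw [mul_comm (ENNReal.ofReal D), ← mul_assoc, ENNReal.inv_mul_cancel hZne hZtop,
            one_mul]
  -- combine to get real inequality  1 - m ≤ D
  have hreal : 1 - m ≤ D := by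
    have h1 : ENNReal.ofReal (1 - m) ≤ ENNReal.ofReal D := by
      rw [ENNReal.ofReal_sub 1 hm0.le, ENNReal.ofReal_one]
      exact hlow.trans hup
    exact (ENNReal.ofReal_le_ofReal_iff hDpos.le).mp h1
  -- numeric contradiction
  set u : ℝ := 1 - m with hu
  have hu0 : 0 < u := by simp [hu]; linarith
  have hu1 : u < 1 := by simp [hu]; linarith
  have hlogu : Real.log u < 0 := Real.log_neg hu0 hu1
  have hl : ℓ = 18 - 13 * Real.log u := by
    rw [hldef, Real.log_div (Real.exp_ne_zero 1) hu0.ne', Real.log_exp]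
    ring
  have hDexp : D = Real.exp ((n:ℝ) * (Real.log 2 - ℓ / 2)) := by
    rw [hD, show ((2:ℝ)^n = Real.exp ((n:ℝ) * Real.log 2)) from by
      rw [Real.exp_nat_mul, Real.exp_log (by norm_num : (0:ℝ) < 2)],
      ← Real.exp_add, ← Real.exp_add]
    congr 1
    ring
  have hc : Real.log 2 - ℓ / 2 < Real.log u := by
    have h2 : Real.log 2 < 0.6931471808 := Real.log_two_lt_d9
    rw [hl]
    nlinarith
  have hcneg : Real.log 2 - ℓ / 2 < 0 := lt_trans hc hlogu
  have hn1 : (1:ℝ) ≤ (n:ℝ) := by exact_mod_cast hn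
  have hnc : (n:ℝ) * (Real.log 2 - ℓ / 2) ≤ 1 * (Real.log 2 - ℓ / 2) :=
    mul_le_mul_of_nonpos_right hn1 hcneg.le
  have hfinal : D < u := by
    rw [hDexp, ← Real.exp_log hu0]
    apply Real.exp_lt_exp.2
    calc (n:ℝ) * (Real.log 2 - ℓ / 2) ≤ 1 * (Real.log 2 - ℓ / 2) := hnc
      _ = Real.log 2 - ℓ / 2 := one_mul _
      _ < Real.log u := hc
  linarith
end
end

section
/- Let K = {(x,t) ∈ ℝⁿ×ℝ : V(x) ≤ nt} for convex V with min V = V₀, and suppose the level set {x : V(x) - V₀ ≤ 10n} contains a unit ball B₁(x₀). Let α = n·e_{n+1}. Then for all s > 0, the blow-up K_s = {z : dist(z, K) ≤ s} satisfies ∫_{K_s} exp(-α·v) dv ≤ exp(13·s·n) · ∫_K exp(-α·v) dv. -/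
open MeasureTheory Set
open scoped ENNReal

noncomputable section

lemma coord_dist_le' {m : ℕ} (z w : EuclideanSpace ℝ (Fin m)) (i : Fin m) :
    dist (z i) (w i) ≤ dist z w := by
  rw [EuclideanSpace.dist_eq]
  have h1 : dist (z i) (w i) = Real.sqrt (dist (z i) (w i) ^ 2) :=
    (Real.sqrt_sq dist_nonneg).symm
  rw [h1]
  apply Real.sqrt_le_sqrt
  exact Finset.single_le_sum (f := fun j => dist (z j) (w j) ^ 2)
    (fun j _ => sq_nonneg _) (Finset.mem_univ i)

def projE {n : ℕ} (z : EuclideanSpace ℝ (Fin (n + 1))) : EuclideanSpace ℝ (Fin n) :=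
  WithLp.toLp 2 (fun i => z i.castSucc)

lemma proj_dist_le' {n : ℕ} (z w : EuclideanSpace ℝ (Fin (n + 1))) :
    dist (projE z) (projE w) ≤ dist z w := by
  rw [EuclideanSpace.dist_eq (projE z) (projE w), EuclideanSpace.dist_eq z w]
  apply Real.sqrt_le_sqrt
  rw [Fin.sum_univ_castSucc]
  exact le_add_of_nonneg_right (sq_nonneg _)

set_option maxHeartbeats 2000000 in
/-- Let `K = {(x,t) : V x ≤ n t} ⊆ ℝ^{n+1}` for convex `V` with `min V = V₀`,
and suppose the level set `{V ≤ V₀ + 10 n}` contains a unit ball `B₁(x₀)`. Then for all `s > 0`,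
the blow-up `K_s = {z : dist(z, K) ≤ s}` satisfies
`∫_{K_s} exp(-n t) ≤ exp(13 s n) ∫_K exp(-n t)`. -/
theorem exp_blowup_growth (n : ℕ) (hn : 1 ≤ n)
    (V : EuclideanSpace ℝ (Fin n) → ℝ) (V₀ : ℝ)
    (hV : ConvexOn ℝ Set.univ V)
    (hmin : ∀ x, V₀ ≤ V x) (hatt : ∃ x, V x = V₀)
    (hInt : Integrable (fun x => Real.exp (-V x)))
    (x₀ : EuclideanSpace ℝ (Fin n))
    (hball : Metric.ball x₀ 1 ⊆ {x | V x - V₀ ≤ 10 * n})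
    (K : Set (EuclideanSpace ℝ (Fin (n + 1))))
    (hK : K = {z | V (WithLp.toLp 2 (fun i => z i.castSucc)) ≤ (n : ℝ) * z (Fin.last n)})
    (s : ℝ) (hs : 0 < s) :
    (∫⁻ z in {z | Metric.infDist z K ≤ s},
        ENNReal.ofReal (Real.exp (-(n : ℝ) * z (Fin.last n))))
      ≤ ENNReal.ofReal (Real.exp (13 * s * n)) *
        ∫⁻ z in K, ENNReal.ofReal (Real.exp (-(n : ℝ) * z (Fin.last n))) := by
  classical
  have hnR : (1 : ℝ) ≤ n := by exact_mod_cast hn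
  have hn0 : (0 : ℝ) < n := lt_of_lt_of_le one_pos hnR
  set π : EuclideanSpace ℝ (Fin (n + 1)) → EuclideanSpace ℝ (Fin n) := fun z => projE z with hπdef
  set t₀ : ℝ := 11 + V₀ / n with ht₀
  set p : EuclideanSpace ℝ (Fin (n + 1)) := WithLp.toLp 2 (fun i => Fin.lastCases t₀ (fun j => x₀ j) i) with hp
  have hp_last : p (Fin.last n) = t₀ := by simp [hp]
  have hp_cast : ∀ j : Fin n, p j.castSucc = x₀ j := fun j => by simp [hp]
  have hπp : π p = x₀ := by ext j; exact hp_cast j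
  -- Lipschitz projections
  have hπlip : LipschitzWith 1 π := LipschitzWith.of_dist_le_mul fun z w => by
    rw [NNReal.coe_one, one_mul]; exact proj_dist_le' z w
  have hπeq : ∀ z : EuclideanSpace ℝ (Fin (n + 1)), WithLp.toLp 2 (fun i => z i.castSucc) = π z :=
    fun z => rfl
  have hlastlip : LipschitzWith 1 (fun z : EuclideanSpace ℝ (Fin (n + 1)) => z (Fin.last n)) :=
    LipschitzWith.of_dist_le_mul fun z w => by
      rw [NNReal.coe_one, one_mul]; exact coord_dist_le' z w (Fin.last n)
  have hVc : Continuous V := continuousOn_univ.mp (hV.continuousOn isOpen_univ)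
  have hKclosed : IsClosed K := by
    rw [hK]
    exact isClosed_le (hVc.comp hπlip.continuous)
      (continuous_const.mul hlastlip.continuous)
  -- Convexity of K
  have hKconv : Convex ℝ K := by
    rw [hK]
    intro z₁ h₁ z₂ h₂ a b ha hb hab
    simp only [mem_setOf_eq] at h₁ h₂ ⊢
    have hπadd : WithLp.toLp 2 (fun i => (a • z₁ + b • z₂) i.castSucc)
        = a • (WithLp.toLp 2 (fun i => z₁ i.castSucc) : EuclideanSpace ℝ (Fin n))
          + b • WithLp.toLp 2 (fun i => z₂ i.castSucc) := by
      ext i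
      simp [PiLp.add_apply, PiLp.smul_apply]
    rw [hπadd]
    calc V (a • (WithLp.toLp 2 (fun i => z₁ i.castSucc) : EuclideanSpace ℝ (Fin n))
          + b • WithLp.toLp 2 (fun i => z₂ i.castSucc))
        ≤ a * V (WithLp.toLp 2 (fun i => z₁ i.castSucc)) + b * V (WithLp.toLp 2 (fun i => z₂ i.castSucc)) :=
          hV.2 (mem_univ _) (mem_univ _) ha hb hab
      _ ≤ a * ((n : ℝ) * z₁ (Fin.last n)) + b * ((n : ℝ) * z₂ (Fin.last n)) := by
          gcongr
      _ = (n : ℝ) * (a • z₁ + b • z₂) (Fin.last n) := by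
          simp [PiLp.add_apply, PiLp.smul_apply]; ring
  -- unit ball inside K
  have hballK : Metric.closedBall p 1 ⊆ K := by
    have hopen : Metric.ball p 1 ⊆ K := by
      intro z hz
      rw [Metric.mem_ball] at hz
      rw [hK]; simp only [mem_setOf_eq]
      have hx : dist (π z) x₀ < 1 := by
        rw [← hπp]
        exact lt_of_le_of_lt (proj_dist_le' z p) hz
      have hVz : V (π z) - V₀ ≤ 10 * n := hball (Metric.mem_ball.mpr hx)
      have ht : dist (z (Fin.last n)) t₀ < 1 := by
        rw [← hp_last]
        exact lt_of_le_of_lt (coord_dist_le' z p (Fin.last n)) hz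
      have ht' : t₀ - 1 ≤ z (Fin.last n) := by
        have := abs_sub_le_iff.mp (le_of_lt (by rwa [Real.dist_eq] at ht))
        linarith [this.2]
      have hnt₀ : (n : ℝ) * t₀ = 11 * n + V₀ := by
        rw [ht₀, mul_add, mul_div_cancel₀ V₀ (ne_of_gt hn0)]; ring
      have hmul : (n : ℝ) * (t₀ - 1) ≤ (n : ℝ) * z (Fin.last n) :=
        mul_le_mul_of_nonneg_left ht' hn0.le
      have hexp : (n : ℝ) * (t₀ - 1) = (n : ℝ) * t₀ - n := by ring
      show V (π z) ≤ (n : ℝ) * z (Fin.last n)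
      linarith
    calc Metric.closedBall p 1 = closure (Metric.ball p 1) :=
          (closure_ball p one_ne_zero).symm
      _ ⊆ closure K := closure_mono hopen
      _ = K := hKclosed.closure_eq
  have hpK : p ∈ K := hballK (Metric.mem_closedBall_self zero_le_one)
  -- the homothety
  set T : EuclideanSpace ℝ (Fin (n + 1)) → EuclideanSpace ℝ (Fin (n + 1)) := fun w => (1 + s) • w - s • p with hT
  have h1s : (0 : ℝ) < 1 + s := by linarith
  -- blow-up is inside image of K
  have hsub : {z : EuclideanSpace ℝ (Fin (n + 1)) | Metric.infDist z K ≤ s} ⊆ T '' K := by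
    intro z hz
    obtain ⟨a, haK, hda⟩ := hKclosed.exists_infDist_eq_dist ⟨p, hpK⟩ z
    have hdza : dist z a ≤ s := by
      have hz' : Metric.infDist z K ≤ s := hz
      rwa [hda] at hz' 
    set k : EuclideanSpace ℝ (Fin (n + 1)) := p + s⁻¹ • (z - a) with hk
    have hkK : k ∈ K := by
      apply hballK
      rw [Metric.mem_closedBall, hk]
      have : dist (p + s⁻¹ • (z - a)) p = s⁻¹ * ‖z - a‖ := by
        rw [dist_eq_norm, add_sub_cancel_left, norm_smul, Real.norm_eq_abs,
          abs_of_pos (inv_pos.mpr hs)]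
      rw [this]
      rw [dist_eq_norm] at hdza
      calc s⁻¹ * ‖z - a‖ ≤ s⁻¹ * s := by
            apply mul_le_mul_of_nonneg_left hdza (le_of_lt (inv_pos.mpr hs))
        _ = 1 := inv_mul_cancel₀ (ne_of_gt hs)
    set w : EuclideanSpace ℝ (Fin (n + 1)) := (1 + s)⁻¹ • a + (s / (1 + s)) • k with hw
    have hwK : w ∈ K := by
      apply hKconv haK hkK (le_of_lt (inv_pos.mpr h1s))
        (le_of_lt (div_pos hs h1s))
      field_simp
    refine ⟨w, hwK, ?_⟩
    rw [hT]
    show (1 + s) • w - s • p = z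
    rw [hw, hk]
    match_scalars <;> field_simp <;> ring
  -- change of variables
  set f : EuclideanSpace ℝ (Fin (n + 1)) → ℝ≥0∞ := fun z => ENNReal.ofReal (Real.exp (-(n : ℝ) * z (Fin.last n))) with hf
  have hf_meas : Measurable f := by
    apply ENNReal.measurable_ofReal.comp
    exact (Real.continuous_exp.comp
      (continuous_const.mul hlastlip.continuous)).measurable
  have hKmeas : MeasurableSet K := hKclosed.measurableSet
  set A : EuclideanSpace ℝ (Fin (n + 1)) →L[ℝ] EuclideanSpace ℝ (Fin (n + 1)) := (1 + s) • ContinuousLinearMap.id ℝ (EuclideanSpace ℝ (Fin (n + 1))) with hA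
  have hT' : ∀ w ∈ K, HasFDerivWithinAt T A K w := by
    intro w _
    have : HasFDerivAt T A w := by
      have h1 : HasFDerivAt (fun x : EuclideanSpace ℝ (Fin (n + 1)) => (1 + s) • x) A w := by
        exact (hasFDerivAt_id w).const_smul (1 + s)
      simpa [hT] using h1.sub_const (s • p)
    exact this.hasFDerivWithinAt
  have hTinj : InjOn T K := by
    intro x _ y _ hxy
    rw [hT] at hxy
    simp only [sub_left_inj] at hxy
    exact smul_right_injective (EuclideanSpace ℝ (Fin (n + 1))) (ne_of_gt h1s) hxy
  have hdet : |A.det| = (1 + s) ^ (n + 1) := by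
    have : A.det = (1 + s) ^ (n + 1) := by
      rw [hA]
      rw [ContinuousLinearMap.det]
      simp only [ContinuousLinearMap.coe_smul, ContinuousLinearMap.coe_id]
      rw [LinearMap.det_smul, LinearMap.det_id, mul_one, finrank_euclideanSpace_fin]
    rw [this, abs_of_pos (pow_pos h1s _)]
  have hchange : ∫⁻ z in T '' K, f z
      = ∫⁻ w in K, ENNReal.ofReal |A.det| * f (T w) := by
    exact lintegral_image_eq_lintegral_abs_det_fderiv_mul volume hKmeas
      (fun w hw => hT' w hw) hTinj f
  -- pointwise bound on K
  have hpoint : ∀ w ∈ K, ENNReal.ofReal |A.det| * f (T w)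
      ≤ ENNReal.ofReal (Real.exp (13 * s * n)) * f w := by
    intro w hwK
    set wl : ℝ := w (Fin.last n) with hwl
    have hwl_ge : V₀ / n ≤ wl := by
      rw [hK] at hwK
      simp only [mem_setOf_eq] at hwK
      rw [div_le_iff₀ hn0]
      calc V₀ ≤ V (WithLp.toLp 2 (fun i => w i.castSucc)) := hmin _
        _ ≤ (n : ℝ) * wl := hwK
        _ = wl * n := mul_comm _ _
    have hTlast : T w (Fin.last n) = (1 + s) * wl - s * t₀ := by
      rw [hT]
      simp [PiLp.sub_apply, PiLp.smul_apply, hp_last, hwl]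
    rw [hf]
    simp only [hTlast, hdet]
    rw [← ENNReal.ofReal_mul (by positivity), ← ENNReal.ofReal_mul (Real.exp_pos _).le]
    apply ENNReal.ofReal_le_ofReal
    have he1 : Real.exp (-(n : ℝ) * ((1 + s) * wl - s * t₀))
        = Real.exp (s * n * (t₀ - wl)) * Real.exp (-(n : ℝ) * wl) := by
      rw [← Real.exp_add]; ring_nf
    have he2 : Real.exp (s * n * (t₀ - wl)) ≤ Real.exp (11 * s * n) := by
      apply Real.exp_le_exp.2
      have h11 : t₀ - wl ≤ 11 := by
        rw [ht₀]; linarith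
      nlinarith [mul_nonneg hs.le hn0.le]
    have he3 : (1 + s) ^ (n + 1) ≤ Real.exp (2 * s * n) := by
      calc (1 + s) ^ (n + 1) ≤ Real.exp s ^ (n + 1) := by
            apply pow_le_pow_left₀ (by linarith) _
            linarith [Real.add_one_le_exp s]
        _ = Real.exp (s * (n + 1)) := by
            rw [← Real.exp_nat_mul]; congr 1; push_cast; ring
        _ ≤ Real.exp (2 * s * n) := by
            apply Real.exp_le_exp.2
            nlinarith
    calc (1 + s) ^ (n + 1) * Real.exp (-(n : ℝ) * ((1 + s) * wl - s * t₀))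
        = (1 + s) ^ (n + 1) * Real.exp (s * n * (t₀ - wl)) * Real.exp (-(n : ℝ) * wl) := by
          rw [he1]; ring
      _ ≤ Real.exp (2 * s * n) * Real.exp (11 * s * n) * Real.exp (-(n : ℝ) * wl) := by
          have := mul_le_mul he3 he2 (Real.exp_pos _).le (Real.exp_pos _).le
          exact mul_le_mul_of_nonneg_right this (Real.exp_pos _).le
      _ = Real.exp (13 * s * n) * Real.exp (-(n : ℝ) * wl) := by
          rw [← Real.exp_add]; ring_nf
  calc (∫⁻ z in {z : EuclideanSpace ℝ (Fin (n + 1)) | Metric.infDist z K ≤ s}, f z)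
      ≤ ∫⁻ z in T '' K, f z := lintegral_mono_set hsub
    _ = ∫⁻ w in K, ENNReal.ofReal |A.det| * f (T w) := hchange
    _ ≤ ∫⁻ w in K, ENNReal.ofReal (Real.exp (13 * s * n)) * f w :=
        setLIntegral_mono (by
          exact (measurable_const.mul hf_meas)) hpoint
    _ = ENNReal.ofReal (Real.exp (13 * s * n)) * ∫⁻ w in K, f w :=
        lintegral_const_mul _ hf_meas
end
end

section
/- Suppose a logconcave probability density on ℝⁿ proportional to e^{-V} is isotropic (zero mean, identity covariance). Then for V₀ = min V and any c > 0, every point x with V(x) - V₀ ≤ c·n satisfies ‖x‖ ≤ 8·e^{c+1}·n. -/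
open MeasureTheory Set
open scoped ENNReal

noncomputable section

set_option maxHeartbeats 2000000 in
/-- If the logconcave probability density proportional to `exp (-V)` on `ℝⁿ` is
isotropic (zero mean, identity covariance), then for `V₀ = min V` and any `c > 0`, every point `x`
with `V x - V₀ ≤ c n` satisfies `‖x‖ ≤ 8 e^{c+1} n`. -/
theorem diameter_of_level_sets (n : ℕ) (hn : 1 ≤ n)
    (V : EuclideanSpace ℝ (Fin n) → ℝ) (V₀ : ℝ)
    (hV : ConvexOn ℝ Set.univ V)
    (hmin : ∀ x, V₀ ≤ V x) (hatt : ∃ x, V x = V₀)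
    (hInt : Integrable (fun x => Real.exp (-V x)))
    (P : Measure (EuclideanSpace ℝ (Fin n)))
    (hP : P = ((volume.withDensity fun x => ENNReal.ofReal (Real.exp (-V x))) Set.univ)⁻¹ •
      volume.withDensity (fun x => ENNReal.ofReal (Real.exp (-V x))))
    (hmean : (∫ x, x ∂P) = 0)
    (hcov : ∀ v : EuclideanSpace ℝ (Fin n), (∫ x, (inner ℝ v x : ℝ) ^ 2 ∂P) = ‖v‖ ^ 2)
    (c : ℝ) (hc : 0 < c) :
    ∀ x : EuclideanSpace ℝ (Fin n), V x - V₀ ≤ c * n → ‖x‖ ≤ 8 * Real.exp (c + 1) * n := by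
  classical
  intro x₀ hx₀
  by_contra hcon
  push_neg at hcon
  have hn1 : (1:ℝ) ≤ (n:ℝ) := by exact_mod_cast hn
  have hnpos : (0:ℝ) < (n:ℝ) := by linarith
  set Ee : ℝ := Real.exp (c + 1) with hEe_def
  have hEe : (2.7:ℝ) ≤ Ee := by
    have h1 : Real.exp 1 ≤ Real.exp (c+1) := Real.exp_le_exp.mpr (by linarith)
    have h2 := Real.exp_one_gt_d9
    rw [hEe_def]; nlinarith
  have hEepos : (0:ℝ) < Ee := by linarith
  have hR0 : 0 < ‖x₀‖ := lt_trans (by positivity) hcon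
  -- continuity and positivity of the density
  have hVc : Continuous V := continuousOn_univ.mp (hV.continuousOn isOpen_univ)
  have hfc : Continuous fun x : EuclideanSpace ℝ (Fin n) => Real.exp (-V x) :=
    Real.continuous_exp.comp hVc.neg
  -- total integral
  set I : ℝ := ∫ x, Real.exp (-V x) with hI_def
  have hIpos : 0 < I := by
    rw [hI_def]
    refine (integral_pos_iff_support_of_nonneg (fun x => (Real.exp_pos _).le) hInt).mpr ?_
    have hsupp : (Function.support fun x : EuclideanSpace ℝ (Fin n) => Real.exp (-V x)) = univ :=
      eq_univ_of_forall fun x => (Real.exp_pos _).ne'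
    rw [hsupp]
    exact isOpen_univ.measure_pos volume univ_nonempty
  have hνu : (volume.withDensity fun x => ENNReal.ofReal (Real.exp (-V x))) Set.univ
      = ENNReal.ofReal I := by
    rw [withDensity_apply _ MeasurableSet.univ, Measure.restrict_univ,
      ← ofReal_integral_eq_lintegral_ofReal hInt (ae_of_all _ fun x => (Real.exp_pos (-V x)).le)]
  have hProb : IsProbabilityMeasure P := by
    constructor
    rw [hP, Measure.smul_apply, smul_eq_mul, hνu]
    exact ENNReal.inv_mul_cancel (ENNReal.ofReal_pos.mpr hIpos).ne' ENNReal.ofReal_ne_top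
  -- measure of a measurable set in terms of set integrals
  have hPA : ∀ A : Set (EuclideanSpace ℝ (Fin n)), MeasurableSet A →
      (P A).toReal = (∫ x in A, Real.exp (-V x)) / I := by
    intro A hA
    have h1 : (volume.withDensity fun x => ENNReal.ofReal (Real.exp (-V x))) A
        = ENNReal.ofReal (∫ x in A, Real.exp (-V x)) := by
      rw [withDensity_apply _ hA,
        ← ofReal_integral_eq_lintegral_ofReal hInt.restrict
          (ae_of_all _ fun x => (Real.exp_pos (-V x)).le)]
    rw [hP, Measure.smul_apply, smul_eq_mul, hνu, h1, ENNReal.toReal_mul, ENNReal.toReal_inv,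
      ENNReal.toReal_ofReal hIpos.le,
      ENNReal.toReal_ofReal (integral_nonneg fun x => (Real.exp_pos (-V x)).le)]
    rw [div_eq_mul_inv, mul_comm]
  -- the direction u
  set u : EuclideanSpace ℝ (Fin n) := ‖x₀‖⁻¹ • x₀ with hu_def
  have hℓx₀ : (inner ℝ u x₀ : ℝ) = ‖x₀‖ := by
    rw [hu_def, real_inner_smul_left, real_inner_self_eq_norm_sq, sq, inv_mul_cancel_left₀ hR0.ne']
  have hunorm : ‖u‖ = 1 := by
    rw [hu_def, norm_smul, norm_inv, norm_norm, inv_mul_cancel₀ hR0.ne']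
  have hvar : (∫ x, (inner ℝ u x : ℝ) ^ 2 ∂P) = 1 := by rw [hcov u, hunorm, one_pow]
  have hint2 : Integrable (fun x => (inner ℝ u x : ℝ) ^ 2) P := by
    by_contra h
    rw [integral_undef h] at hvar
    exact one_ne_zero hvar.symm
  have hℓc : Continuous fun x : EuclideanSpace ℝ (Fin n) => (inner ℝ u x : ℝ) :=
    continuous_const.inner continuous_id
  -- Markov / Chebyshev
  have markov : ∀ t : ℝ, 0 < t →
      (P {x : EuclideanSpace ℝ (Fin n) | t ≤ (inner ℝ u x : ℝ)}).toReal ≤ 1 / t ^ 2 := by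
    intro t ht
    have h1 := mul_meas_ge_le_integral_of_nonneg (μ := P)
      (ae_of_all _ fun x => sq_nonneg ((inner ℝ u x : ℝ))) hint2 (t ^ 2)
    rw [hvar, measureReal_def] at h1
    have hsub : {x : EuclideanSpace ℝ (Fin n) | t ≤ (inner ℝ u x : ℝ)}
        ⊆ {x | t ^ 2 ≤ (inner ℝ u x : ℝ) ^ 2} := by
      intro x hx
      exact pow_le_pow_left₀ ht.le hx 2
    have h2 : (P {x : EuclideanSpace ℝ (Fin n) | t ≤ (inner ℝ u x : ℝ)}).toReal
        ≤ (P {x | t ^ 2 ≤ (inner ℝ u x : ℝ) ^ 2}).toReal :=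
      ENNReal.toReal_mono (measure_ne_top _ _) (measure_mono hsub)
    have ht2 : (0:ℝ) < t ^ 2 := by positivity
    have h3 : (P {x : EuclideanSpace ℝ (Fin n) | t ^ 2 ≤ (inner ℝ u x : ℝ) ^ 2}).toReal
        ≤ 1 / t ^ 2 := by
      rw [le_div_iff₀ ht2]
      linarith
    exact h2.trans h3
  -- the slab S
  set S : Set (EuclideanSpace ℝ (Fin n)) := {x | (inner ℝ u x : ℝ) ^ 2 ≤ 4} with hS_def
  have hmS : MeasurableSet S := measurableSet_le (hℓc.pow 2).measurable measurable_const
  have hS34 : 3 / 4 ≤ (P S).toReal := by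
    have h1 := mul_meas_ge_le_integral_of_nonneg (μ := P)
      (ae_of_all _ fun x => sq_nonneg ((inner ℝ u x : ℝ))) hint2 4
    rw [hvar, measureReal_def] at h1
    have hcompl : Sᶜ ⊆ {x : EuclideanSpace ℝ (Fin n) | 4 ≤ (inner ℝ u x : ℝ) ^ 2} := by
      intro x hx
      simp only [hS_def, mem_compl_iff, mem_setOf_eq, not_le] at hx ⊢
      linarith
    have h2 : (P Sᶜ).toReal ≤ (P {x : EuclideanSpace ℝ (Fin n) | 4 ≤ (inner ℝ u x : ℝ) ^ 2}).toReal :=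
      ENNReal.toReal_mono (measure_ne_top _ _) (measure_mono hcompl)
    have h3 : (P Sᶜ).toReal = 1 - (P S).toReal := by
      rw [prob_compl_eq_one_sub hmS,
        ENNReal.toReal_sub_of_le prob_le_one ENNReal.one_ne_top, ENNReal.toReal_one]
    linarith
  -- the contraction parameters
  set lam : ℝ := 1 / ((n:ℝ) + 1) with hlam_def
  have hlam0 : 0 < lam := by rw [hlam_def]; positivity
  set a : ℝ := 1 - lam with ha_def
  have ha0 : 0 < a := by
    rw [ha_def, hlam_def]
    have : (1:ℝ)/((n:ℝ)+1) < 1 := by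
      rw [div_lt_one (by linarith)]; linarith
    linarith
  have ha1 : a ≤ 1 := by
    rw [ha_def]; linarith
  have ha_eq : a = (n:ℝ)/((n:ℝ)+1) := by
    rw [ha_def, hlam_def]; field_simp; ring
  -- change of variables for the affine contraction
  have hchg : ∀ g : EuclideanSpace ℝ (Fin n) → ℝ,
      (∫ y, g (a • y + lam • x₀)) = (a ^ n)⁻¹ * ∫ x, g x := by
    intro g
    have h1 : ∀ y : EuclideanSpace ℝ (Fin n),
        a • (y + (a⁻¹ * lam) • x₀) = a • y + lam • x₀ := by
      intro y
      rw [smul_add, ← mul_smul, ← mul_assoc, mul_inv_cancel₀ ha0.ne', one_mul]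
    calc (∫ y, g (a • y + lam • x₀))
        = ∫ y, (fun z => g (a • z)) (y + (a⁻¹ * lam) • x₀) := by
          congr 1; funext y
          show g (a • y + lam • x₀) = g (a • (y + (a⁻¹ * lam) • x₀))
          rw [h1]
      _ = ∫ z, g (a • z) := by
          exact integral_add_right_eq_self (μ := volume) (fun z => g (a • z))
            ((a⁻¹ * lam) • x₀)
      _ = (a ^ Module.finrank ℝ (EuclideanSpace ℝ (Fin n)))⁻¹ • ∫ x, g x :=
          Measure.integral_comp_smul_of_nonneg volume g a (hR := ha0.le)
      _ = (a ^ n)⁻¹ * ∫ x, g x := by rw [finrank_euclideanSpace_fin, smul_eq_mul]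
  -- the image slab
  set s : Set (EuclideanSpace ℝ (Fin n)) := (fun z => a⁻¹ • (z - lam • x₀)) ⁻¹' S with hs_def
  have hs_meas : MeasurableSet s := by
    have hcont : Continuous fun z : EuclideanSpace ℝ (Fin n) => a⁻¹ • (z - lam • x₀) :=
      (continuous_id.sub continuous_const).const_smul a⁻¹
    exact hmS.preimage hcont.measurable
  have hmemT : ∀ y : EuclideanSpace ℝ (Fin n), (a • y + lam • x₀ ∈ s) ↔ y ∈ S := by
    intro y
    rw [hs_def, mem_preimage, add_sub_cancel_right, inv_smul_smul₀ ha0.ne']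
  -- change of variables identity for set integrals
  have hCOV : (∫ y in S, Real.exp (-V (a • y + lam • x₀)))
      = (a ^ n)⁻¹ * ∫ z in s, Real.exp (-V z) := by
    have hind : ∀ y : EuclideanSpace ℝ (Fin n),
        indicator S (fun y => Real.exp (-V (a • y + lam • x₀))) y
          = indicator s (fun z => Real.exp (-V z)) (a • y + lam • x₀) := by
      intro y
      by_cases hy : y ∈ S
      · rw [indicator_of_mem hy, indicator_of_mem ((hmemT y).mpr hy)]
      · rw [indicator_of_notMem hy, indicator_of_notMem (fun hmem => hy ((hmemT y).mp hmem))]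
    rw [← integral_indicator hmS, ← integral_indicator hs_meas]
    calc (∫ y, indicator S (fun y => Real.exp (-V (a • y + lam • x₀))) y)
        = ∫ y, (indicator s fun z => Real.exp (-V z)) (a • y + lam • x₀) := by
          congr 1; funext y; exact hind y
      _ = (a ^ n)⁻¹ * ∫ z, indicator s (fun z => Real.exp (-V z)) z :=
          hchg (indicator s fun z => Real.exp (-V z))
  -- pointwise comparison from convexity
  have hpt : ∀ y : EuclideanSpace ℝ (Fin n),
      Real.exp (-(lam * (c * n))) * Real.exp (-V y) ≤ Real.exp (-V (a • y + lam • x₀)) := by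
    intro y
    rw [← Real.exp_add]
    apply Real.exp_le_exp.mpr
    have hconv := hV.2 (mem_univ y) (mem_univ x₀) ha0.le hlam0.le (by rw [ha_def]; ring)
    simp only [smul_eq_mul] at hconv
    have h2 : V x₀ ≤ V₀ + c * n := by linarith
    have h3 : V₀ ≤ V y := hmin y
    have h4 : lam * V x₀ ≤ lam * V₀ + lam * (c * ↑n) := by
      have h := mul_le_mul_of_nonneg_left h2 hlam0.le
      rw [mul_add] at h; exact h
    have h5 : lam * V₀ ≤ lam * V y := mul_le_mul_of_nonneg_left h3 hlam0.le
    have h6 : a * V y + lam * V y = V y := by rw [ha_def]; ring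
    linarith [hconv, h4, h5, h6]
  -- integrability of the composed density
  have hIntTr : Integrable (fun z : EuclideanSpace ℝ (Fin n) => Real.exp (-V (z + lam • x₀))) := by
    have h := (measurePreserving_add_right (volume : Measure (EuclideanSpace ℝ (Fin n)))
      (lam • x₀)).integrable_comp_emb (Homeomorph.addRight (lam • x₀)).measurableEmbedding
      (g := fun z => Real.exp (-V z))
    exact h.mpr hInt
  have hIntT : Integrable (fun y : EuclideanSpace ℝ (Fin n) =>
      Real.exp (-V (a • y + lam • x₀))) := by
    have h := hIntTr.comp_smul (R := a) ha0.ne'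
    simpa using h
  -- comparison of set integrals
  have hmono : Real.exp (-(lam * (c * n))) * (∫ y in S, Real.exp (-V y))
      ≤ ∫ y in S, Real.exp (-V (a • y + lam • x₀)) := by
    rw [← integral_const_mul]
    exact setIntegral_mono ((hInt.const_mul _).restrict) hIntT.restrict (fun y => hpt y)
  -- the lower bound on the mass of s
  have hSnn : 0 ≤ ∫ y in S, Real.exp (-V y) := integral_nonneg fun y => (Real.exp_pos _).le
  have hsmass : Real.exp (-(lam * (c * n))) * a ^ n * (P S).toReal ≤ (P s).toReal := by
    rw [hPA S hmS, hPA s hs_meas]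
    have h1 : (∫ z in s, Real.exp (-V z))
        = a ^ n * ∫ y in S, Real.exp (-V (a • y + lam • x₀)) := by
      rw [hCOV, ← mul_assoc, mul_inv_cancel₀ (by positivity : (a:ℝ) ^ n ≠ 0), one_mul]
    rw [h1]
    have h2 : Real.exp (-(lam * (c * n))) * a ^ n * ((∫ y in S, Real.exp (-V y)) / I)
        = (a ^ n * (Real.exp (-(lam * (c * n))) * (∫ y in S, Real.exp (-V y)))) / I := by
      ring
    rw [h2]
    have h4 : a ^ n * (Real.exp (-(lam * (c * ↑n))) * ∫ y in S, Real.exp (-V y))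
        ≤ a ^ n * ∫ y in S, Real.exp (-V (a • y + lam • x₀)) :=
      mul_le_mul_of_nonneg_left hmono (by positivity)
    have h5 := mul_le_mul_of_nonneg_right h4 (inv_nonneg.mpr hIpos.le)
    simpa [div_eq_mul_inv] using h5
  -- the threshold
  set t : ℝ := lam * ‖x₀‖ - 2 with ht_def
  have hsub2 : s ⊆ {x : EuclideanSpace ℝ (Fin n) | t ≤ (inner ℝ u x : ℝ)} := by
    intro z hz
    have hy : (inner ℝ u (a⁻¹ • (z - lam • x₀)) : ℝ) ^ 2 ≤ 4 := hz
    have hzy : z = a • (a⁻¹ • (z - lam • x₀)) + lam • x₀ := by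
      rw [smul_inv_smul₀ ha0.ne']; abel
    have h1 : -2 ≤ (inner ℝ u (a⁻¹ • (z - lam • x₀)) : ℝ) := by nlinarith [hy]
    have h2 : (inner ℝ u z : ℝ)
        = a * (inner ℝ u (a⁻¹ • (z - lam • x₀)) : ℝ) + lam * ‖x₀‖ := by
      have e1 : (inner ℝ u (lam • x₀) : ℝ) = lam * (inner ℝ u x₀ : ℝ) :=
        real_inner_smul_right u x₀ lam
      have e2 : (inner ℝ u (a • (a⁻¹ • (z - lam • x₀))) : ℝ)
          = a * (inner ℝ u (a⁻¹ • (z - lam • x₀)) : ℝ) :=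
        real_inner_smul_right u _ a
      conv_lhs => rw [hzy]
      rw [inner_add_right, e1, e2, hℓx₀]
    have h3 : -2 * a ≤ a * (inner ℝ u (a⁻¹ • (z - lam • x₀)) : ℝ) := by nlinarith [h1, ha0.le]
    simp only [mem_setOf_eq]
    rw [h2, ht_def]
    nlinarith [h3, ha1, ha0.le]
  -- lower bound for t
  have htEe : 4 * Ee - 2 ≤ t := by
    have h9 : lam * (8 * Ee * ↑n) < lam * ‖x₀‖ := mul_lt_mul_of_pos_left hcon hlam0
    have h11 : lam * (8 * Ee * ↑n) = 8 * Ee * ((n:ℝ)/((n:ℝ)+1)) := by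
      rw [hlam_def]; field_simp; try ring
    have h10 : (1:ℝ)/2 ≤ (n:ℝ)/((n:ℝ)+1) := by
      rw [div_le_div_iff₀ (by norm_num) (by linarith)]; linarith
    have h12 : 4 * Ee ≤ 8 * Ee * ((n:ℝ)/((n:ℝ)+1)) := by nlinarith [hEepos]
    rw [ht_def]
    rw [h11] at h9
    linarith
  have ht0 : 0 < t := by nlinarith [htEe, hEe]
  -- the main inequality
  have hchain : Real.exp (-(lam * (c * ↑n))) * a ^ n * (3/4) ≤ 1 / t ^ 2 := by
    have h1 : Real.exp (-(lam * (c * ↑n))) * a ^ n * (3/4)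
        ≤ Real.exp (-(lam * (c * ↑n))) * a ^ n * (P S).toReal := by
      have hge : (0:ℝ) ≤ Real.exp (-(lam * (c * ↑n))) * a ^ n := by positivity
      nlinarith [hS34, hge]
    have h2 : (P s).toReal ≤ (P {x : EuclideanSpace ℝ (Fin n) | t ≤ (inner ℝ u x : ℝ)}).toReal :=
      ENNReal.toReal_mono (measure_ne_top _ _) (measure_mono hsub2)
    linarith [h1, hsmass, h2, markov t ht0]
  -- numerics
  have hexp_lb : Real.exp (-c) ≤ Real.exp (-(lam * (c * ↑n))) := by
    apply Real.exp_le_exp.mpr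
    have h1 : lam * (c * ↑n) = c * ((n:ℝ)/((n:ℝ)+1)) := by rw [hlam_def]; field_simp; try ring
    have h2 : (n:ℝ)/((n:ℝ)+1) ≤ 1 := by rw [div_le_one (by linarith)]; linarith
    have h3 : (0:ℝ) ≤ (n:ℝ)/((n:ℝ)+1) := by positivity
    nlinarith [hc.le, h2, h3]
  have han_lb : (Real.exp 1)⁻¹ ≤ a ^ n := by
    have hxp : (0:ℝ) < 1 + 1/(n:ℝ) := by positivity
    have h1 : (1 + 1/(n:ℝ)) ≤ Real.exp (1/(n:ℝ)) := by
      have := Real.add_one_le_exp (1/(n:ℝ)); linarith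
    have h2 : (1 + 1/(n:ℝ)) ^ n ≤ Real.exp 1 := by
      calc (1 + 1/(n:ℝ)) ^ n ≤ Real.exp (1/(n:ℝ)) ^ n := pow_le_pow_left₀ hxp.le h1 n
        _ = Real.exp 1 := by
            rw [← Real.exp_nat_mul]
            congr 1
            field_simp
    have ha_eq2 : a = (1 + 1/(n:ℝ))⁻¹ := by
      have hmul : a * (1 + 1/(n:ℝ)) = 1 := by rw [ha_eq]; field_simp
      exact eq_inv_of_mul_eq_one_left hmul
    rw [ha_eq2, inv_pow]
    exact inv_anti₀ (by positivity) h2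
  -- final contradiction
  have h1 : Ee⁻¹ = Real.exp (-c) * (Real.exp 1)⁻¹ := by
    rw [hEe_def, ← Real.exp_neg, ← Real.exp_neg, ← Real.exp_add]
    congr 1; ring
  have h2 : Real.exp (-c) * (Real.exp 1)⁻¹ ≤ Real.exp (-(lam * (c * ↑n))) * a ^ n :=
    mul_le_mul hexp_lb han_lb (by positivity) (Real.exp_pos _).le
  have hfin : Ee⁻¹ * (3/4) ≤ 1 / t ^ 2 := by
    calc Ee⁻¹ * (3/4) = Real.exp (-c) * (Real.exp 1)⁻¹ * (3/4) := by rw [h1]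
      _ ≤ Real.exp (-(lam * (c * ↑n))) * a ^ n * (3/4) :=
          mul_le_mul_of_nonneg_right h2 (by norm_num)
      _ ≤ 1 / t ^ 2 := hchain
  have h4 : Ee⁻¹ * (3/4) * t ^ 2 ≤ 1 := by
    have ht2 : (0:ℝ) < t ^ 2 := by positivity
    have h := mul_le_mul_of_nonneg_right hfin ht2.le
    rwa [one_div, inv_mul_cancel₀ ht2.ne'] at h
  nlinarith [h4, htEe, hEe, ht0, mul_inv_cancel₀ (ne_of_gt hEepos)]
end
end

section
/- Let f : ℝ → ℝ_{≥0} be an isotropic logconcave probability density (mean 0, variance 1). Then f(0) ≥ 1/8. -/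
open MeasureTheory Set
open scoped ENNReal

noncomputable section

namespace OneDimIsoAux

open Real Filter Topology

/-- Exponential first-moment integral on `(0,∞)`. -/
lemma exp_moment (c s : ℝ) (hc : 0 < c) (hs : 0 < s) :
    IntegrableOn (fun x => x * (c * Real.exp (-(s*x)))) (Ioi (0:ℝ)) ∧
    (∫ x in Ioi (0:ℝ), x * (c * Real.exp (-(s*x)))) = c / s^2 := by
  set g : ℝ → ℝ := fun x => -c * ((x/s + 1/s^2) * Real.exp (-(s*x))) with hgdef
  have hderiv : ∀ x ∈ Ici (0:ℝ), HasDerivAt g (x * (c * Real.exp (-(s*x)))) x := by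
    intro x _
    have h1 : HasDerivAt (fun y : ℝ => y/s + 1/s^2) (1/s) x := by
      have := ((hasDerivAt_id x).div_const s).add_const (1/s^2)
      simpa [one_div] using this
    have h3 : HasDerivAt (fun y : ℝ => -(s*y)) (-s) x := by
      have := ((hasDerivAt_id' x).const_mul s).neg
      rw [mul_one] at this
      exact this
    have h2 : HasDerivAt (fun y : ℝ => Real.exp (-(s*y))) (Real.exp (-(s*x)) * (-s)) x :=
      h3.exp
    have h4 := (h1.mul h2).const_mul (-c)
    refine h4.congr_deriv ?_
    have hs' : s ≠ 0 := ne_of_gt hs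
    field_simp
    ring
  have hpos : ∀ x ∈ Ioi (0:ℝ), 0 ≤ x * (c * Real.exp (-(s*x))) := by
    intro x hx
    have : (0:ℝ) < x := hx
    positivity
  have htend : Tendsto g atTop (𝓝 0) := by
    have T0 : Tendsto (fun x : ℝ => s * x) atTop atTop :=
      Tendsto.const_mul_atTop hs tendsto_id
    have T1 : Tendsto (fun y : ℝ => Real.exp (-y)) atTop (𝓝 0) :=
      Real.tendsto_exp_neg_atTop_nhds_zero
    have T2 : Tendsto (fun x : ℝ => Real.exp (-(s*x))) atTop (𝓝 0) := T1.comp T0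
    have T3 : Tendsto (fun y : ℝ => y ^ 1 * Real.exp (-y)) atTop (𝓝 0) :=
      tendsto_pow_mul_exp_neg_atTop_nhds_zero 1
    have T4 : Tendsto (fun x : ℝ => (s*x) ^ 1 * Real.exp (-(s*x))) atTop (𝓝 0) := T3.comp T0
    have T5 : Tendsto (fun x : ℝ => x/s * Real.exp (-(s*x))) atTop (𝓝 0) := by
      have heq : (fun x : ℝ => x/s * Real.exp (-(s*x)))
          = fun x : ℝ => (1/s^2) * ((s*x) ^ 1 * Real.exp (-(s*x))) := by
        funext x
        have hs' : s ≠ 0 := ne_of_gt hs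
        field_simp
      rw [heq]
      have h := T4.const_mul (1/s^2)
      rw [mul_zero] at h
      exact h
    have T6 : Tendsto (fun x : ℝ => (1/s^2) * Real.exp (-(s*x))) atTop (𝓝 0) := by
      have h := T2.const_mul (1/s^2)
      rw [mul_zero] at h
      exact h
    have T7 : Tendsto (fun x : ℝ => (x/s + 1/s^2) * Real.exp (-(s*x))) atTop (𝓝 0) := by
      have heq : (fun x : ℝ => (x/s + 1/s^2) * Real.exp (-(s*x)))
          = fun x : ℝ => x/s * Real.exp (-(s*x)) + (1/s^2) * Real.exp (-(s*x)) := by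
        funext x; ring
      rw [heq]
      simpa using T5.add T6
    have := T7.const_mul (-c)
    simpa [hgdef] using this
  refine ⟨integrableOn_Ioi_deriv_of_nonneg' hderiv hpos htend, ?_⟩
  rw [integral_Ioi_of_hasDerivAt_of_nonneg' hderiv hpos htend]
  have hs' : s ≠ 0 := ne_of_gt hs
  simp only [hgdef]
  field_simp
  simp




/-- Integral over `ℝ` is invariant under reflection. -/
lemma integral_comp_neg' (φ : ℝ → ℝ) : (∫ x, φ (-x)) = ∫ x, φ x := by
  have A : MeasurableEmbedding (fun x : ℝ => -x) :=
    (Homeomorph.neg ℝ).isClosedEmbedding.measurableEmbedding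
  calc (∫ x, φ (-x)) = ∫ y, φ y ∂(Measure.map (fun x : ℝ => -x) volume) :=
        (A.integral_map (g := φ)).symm
    _ = ∫ y, φ y := by rw [Measure.map_neg_eq_self]

/-- Bathtub principle: a density bounded by `c < 1/8` on the left half-line and by `e*c` on the
right half-line cannot have total mass 1, mean 0 and second moment 1. -/
lemma bathtub (f : ℝ → ℝ) (hnn : ∀ x, 0 ≤ f x)
    (hInt : Integrable f) (hIntX : Integrable (fun x => x * f x))
    (hIntX2 : Integrable (fun x => x ^ 2 * f x))
    (hprob : (∫ x, f x) = 1) (hmean : (∫ x, x * f x) = 0)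
    (hvar : (∫ x, x ^ 2 * f x) = 1)
    (c : ℝ) (hc0 : 0 ≤ c) (hc8 : c < 1/8)
    (hcap : ∀ x : ℝ, f x ≤ (if x ≤ 0 then c else Real.exp 1 * c)) : False := by
  set cap : ℝ → ℝ := fun x => if x ≤ 0 then c else Real.exp 1 * c with hcapdef
  set F : ℝ → ℝ := fun x => max (27/5 + (-6/5)*x - x^2) 0 * cap x with hFdef
  have hecap : (1:ℝ) ≤ Real.exp 1 := by
    have := Real.add_one_le_exp (1:ℝ); linarith
  have hcapnn : ∀ x, 0 ≤ cap x := by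
    intro x
    by_cases hx : x ≤ 0 <;> simp [hcapdef, hx] <;> positivity
  have hcaple : ∀ x, cap x ≤ Real.exp 1 * c := by
    intro x
    by_cases hx : x ≤ 0 <;> simp [hcapdef, hx]
    nlinarith
  have hφnn : ∀ x : ℝ, 0 ≤ max (27/5 + (-6/5)*x - x^2) 0 := fun x => le_max_right _ _
  have hφbdd : ∀ x : ℝ, max (27/5 + (-6/5)*x - x^2) 0 ≤ 6 := by
    intro x
    apply max_le _ (by norm_num)
    nlinarith [sq_nonneg (x + 3/5)]
  have hFmeas : AEStronglyMeasurable F := by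
    apply Measurable.aestronglyMeasurable
    apply Measurable.mul
    · fun_prop
    · exact Measurable.ite measurableSet_Iic measurable_const measurable_const
  have hFsupp : Function.support F ⊆ Icc (-3 : ℝ) (9/5) := by
    intro x hx
    by_contra hmem
    apply hx
    have hout : x < -3 ∨ 9/5 < x := by
      rcases le_or_gt (-3:ℝ) x with h1 | h1
      · rcases le_or_gt x (9/5:ℝ) with h2 | h2
        · exact absurd ⟨h1, h2⟩ hmem
        · exact Or.inr h2
      · exact Or.inl h1
    have hA : 27/5 + (-6/5)*x - x^2 ≤ 0 := by
      rcases hout with h | h <;> nlinarith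
    simp only [hFdef]
    rw [max_eq_right hA, zero_mul]
  have hFint : Integrable F := by
    rw [← integrableOn_iff_integrable_of_support_subset hFsupp]
    apply Measure.integrableOn_of_bounded (M := 6 * (Real.exp 1 * c))
    · rw [Real.volume_Icc]; exact ENNReal.ofReal_ne_top
    · exact hFmeas
    · apply ae_of_all
      intro x
      rw [Real.norm_eq_abs, abs_of_nonneg (mul_nonneg (hφnn x) (hcapnn x))]
      exact mul_le_mul (hφbdd x) (hcaple x) (hcapnn x) (by norm_num)
  have hIntL : Integrable (fun x => (27/5 + (-6/5)*x) * f x) := by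
    have heq : (fun x => (27/5 + (-6/5)*x) * f x)
        = fun x => (27/5) * f x + (-6/5) * (x * f x) := by
      funext x; ring
    rw [heq]
    exact (hInt.const_mul _).add (hIntX.const_mul _)
  have hIntLval : (∫ x, (27/5 + (-6/5)*x) * f x) = 27/5 := by
    have heq : (fun x => (27/5 + (-6/5)*x) * f x)
        = fun x => (27/5) * f x + (-6/5) * (x * f x) := by
      funext x; ring
    rw [heq, integral_add (hInt.const_mul _) (hIntX.const_mul _),
      integral_const_mul, integral_const_mul, hprob, hmean]
    ring
  -- pointwise bathtub inequality
  have hptw : ∀ x, (27/5 + (-6/5)*x) * f x - F x ≤ x^2 * f x := by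
    intro x
    simp only [hFdef]
    rcases le_or_gt (27/5 + (-6/5)*x - x^2) 0 with h | h
    · rw [max_eq_right h, zero_mul]
      nlinarith [hnn x]
    · rw [max_eq_left (le_of_lt h)]
      have h1 := hcap x
      have h2 := hcapnn x
      nlinarith [hnn x]
  have hIneq : (∫ x, ((27/5 + (-6/5)*x) * f x - F x)) ≤ ∫ x, x^2 * f x :=
    integral_mono (hIntL.sub hFint) hIntX2 hptw
  rw [integral_sub hIntL hFint, hIntLval, hvar] at hIneq
  -- hIneq : 27/5 - ∫ F ≤ 1, so ∫ F ≥ 22/5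
  -- now compute ∫ F explicitly
  have hd : ∀ y : ℝ, HasDerivAt (fun t : ℝ => 27/5*t + (-3/5)*t^2 - t^3/3)
      (27/5 + (-6/5)*y - y^2) y := by
    intro y
    have h1 := (hasDerivAt_id y).const_mul (27/5 : ℝ)
    have h2 := (hasDerivAt_pow 2 y).const_mul (-3/5 : ℝ)
    have h3 := (hasDerivAt_pow 3 y).div_const 3
    have h4 := (h1.add h2).sub h3
    refine h4.congr_deriv ?_
    push_cast
    ring
  have hpolyc : Continuous (fun x : ℝ => 27/5 + (-6/5)*x - x^2) := by fun_prop
  have I1 : (∫ x in (-3:ℝ)..0, (27/5 + (-6/5)*x - x^2)) = 63/5 := by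
    rw [intervalIntegral.integral_eq_sub_of_hasDerivAt (fun y _ => hd y)
      (hpolyc.intervalIntegrable _ _)]
    norm_num
  have I2 : (∫ x in (0:ℝ)..(9/5), (27/5 + (-6/5)*x - x^2)) = 729/125 := by
    rw [intervalIntegral.integral_eq_sub_of_hasDerivAt (fun y _ => hd y)
      (hpolyc.intervalIntegrable _ _)]
    norm_num
  have hFsplit : (∫ x in Iic (0:ℝ), F x) + (∫ x in Ioi (0:ℝ), F x) = ∫ x, F x := by
    have h := integral_add_compl (measurableSet_Iic (a := (0:ℝ))) hFint
    rw [compl_Iic] at h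
    exact h
  have hFleft : (∫ x in Iic (0:ℝ), F x) = 63/5 * c := by
    have e1 : Iic (0:ℝ) = Iic (-3 : ℝ) ∪ Ioc (-3 : ℝ) 0 :=
      (Iic_union_Ioc_eq_Iic (by norm_num)).symm
    have hdisj : Disjoint (Iic (-3 : ℝ)) (Ioc (-3 : ℝ) 0) :=
      Set.disjoint_left.2 fun x hx1 hx2 => absurd hx2.1 (not_lt.2 hx1)
    rw [e1, setIntegral_union hdisj measurableSet_Ioc
      hFint.integrableOn hFint.integrableOn]
    have hz : (∫ x in Iic (-3 : ℝ), F x) = 0 := by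
      rw [setIntegral_congr_fun measurableSet_Iic (g := fun _ => (0:ℝ))]
      · simp
      · intro x hx
        have hA : 27/5 + (-6/5)*x - x^2 ≤ 0 := by
          have : x ≤ -3 := hx
          nlinarith
        simp only [hFdef]
        rw [max_eq_right hA, zero_mul]
    have hm : (∫ x in Ioc (-3 : ℝ) 0, F x)
        = ∫ x in Ioc (-3 : ℝ) 0, (27/5 + (-6/5)*x - x^2) * c := by
      apply setIntegral_congr_fun measurableSet_Ioc
      intro x hx
      have hA : 0 ≤ 27/5 + (-6/5)*x - x^2 := by
        obtain ⟨h1, h2⟩ := hx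
        nlinarith
      simp only [hFdef, hcapdef]
      rw [max_eq_left hA, if_pos hx.2]
    rw [hz, hm, zero_add, ← intervalIntegral.integral_of_le (by norm_num : (-3:ℝ) ≤ 0),
      intervalIntegral.integral_mul_const, I1]
  have hFright : (∫ x in Ioi (0:ℝ), F x) = 729/125 * (Real.exp 1 * c) := by
    have e1 : Ioi (0:ℝ) = Ioc (0:ℝ) (9/5) ∪ Ioi (9/5 : ℝ) :=
      (Ioc_union_Ioi_eq_Ioi (by norm_num)).symm
    have hdisj : Disjoint (Ioc (0:ℝ) (9/5)) (Ioi (9/5 : ℝ)) :=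
      Set.disjoint_left.2 fun x hx1 hx2 => absurd hx1.2 (not_le.2 hx2)
    rw [e1, setIntegral_union hdisj measurableSet_Ioi
      hFint.integrableOn hFint.integrableOn]
    have hz : (∫ x in Ioi (9/5 : ℝ), F x) = 0 := by
      rw [setIntegral_congr_fun measurableSet_Ioi (g := fun _ => (0:ℝ))]
      · simp
      · intro x hx
        have hA : 27/5 + (-6/5)*x - x^2 ≤ 0 := by
          have : (9/5 : ℝ) < x := hx
          nlinarith
        simp only [hFdef]
        rw [max_eq_right hA, zero_mul]
    have hm : (∫ x in Ioc (0:ℝ) (9/5), F x)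
        = ∫ x in Ioc (0:ℝ) (9/5), (27/5 + (-6/5)*x - x^2) * (Real.exp 1 * c) := by
      apply setIntegral_congr_fun measurableSet_Ioc
      intro x hx
      have hA : 0 ≤ 27/5 + (-6/5)*x - x^2 := by
        obtain ⟨h1, h2⟩ := hx
        nlinarith
      simp only [hFdef, hcapdef]
      rw [max_eq_left hA, if_neg (not_le.2 hx.1)]
    rw [hz, hm, add_zero, ← intervalIntegral.integral_of_le (by norm_num : (0:ℝ) ≤ 9/5),
      intervalIntegral.integral_mul_const, I2]
  -- final numerics
  have hFtotal : (∫ x, F x) = 63/5 * c + 729/125 * (Real.exp 1 * c) := by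
    rw [← hFsplit, hFleft, hFright]
  have hEbound := Real.exp_one_lt_d9
  have h1 : Real.exp 1 * c ≤ 2.7182818286 * c :=
    mul_le_mul_of_nonneg_right (le_of_lt hEbound) hc0
  rw [hFtotal] at hIneq
  nlinarith [hc0, hc8, h1]

/-- Main contradiction lemma: an isotropic logconcave density with `f 0 < 1/8`
which is bounded by `f 0` on the left half-line is impossible. -/
lemma key (f : ℝ → ℝ)
    (hnn : ∀ x, 0 ≤ f x)
    (hlc : ∀ x y : ℝ, ∀ θ : ℝ, 0 ≤ θ → θ ≤ 1 →
      f x ^ θ * f y ^ (1 - θ) ≤ f (θ * x + (1 - θ) * y))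
    (hprob : (∫ x, f x) = 1)
    (hmean : (∫ x, x * f x) = 0)
    (hvar : (∫ x, x ^ 2 * f x) = 1)
    (hc : f 0 < 1/8)
    (hside : ∀ x ≤ 0, f x ≤ f 0) : False := by
  have hInt : Integrable f := by
    by_contra h
    rw [integral_undef h] at hprob
    norm_num at hprob
  have hIntX2 : Integrable (fun x => x ^ 2 * f x) := by
    by_contra h
    rw [integral_undef h] at hvar
    norm_num at hvar
  have hIntX : Integrable (fun x => x * f x) := by
    refine (hInt.add hIntX2).mono ?_ (ae_of_all _ fun x => ?_)
    · exact aestronglyMeasurable_id.mul hInt.1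
    · have h1 : |x * f x| = |x| * f x := by
        rw [abs_mul, abs_of_nonneg (hnn x)]
      have h2 : f x + x ^ 2 * f x ≥ 0 := by nlinarith [hnn x, sq_nonneg x]
      simp only [Pi.add_apply, Real.norm_eq_abs]
      rw [h1, abs_of_nonneg h2]
      nlinarith [sq_nonneg (|x| - 1), hnn x, sq_abs x, abs_nonneg x,
        mul_nonneg (mul_nonneg (abs_nonneg x) (abs_nonneg x)) (hnn x)]
  -- split of the mean
  have hsplitX : (∫ x in Iic (0:ℝ), x * f x) + (∫ x in Ioi (0:ℝ), x * f x) = 0 := by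
    have h := integral_add_compl (measurableSet_Iic (a := (0:ℝ))) hIntX
    rw [compl_Iic] at h
    rw [h, hmean]
  have hsplitF : (∫ x in Iic (0:ℝ), f x) + (∫ x in Ioi (0:ℝ), f x) = 1 := by
    have h := integral_add_compl (measurableSet_Iic (a := (0:ℝ))) hInt
    rw [compl_Iic] at h
    rw [h, hprob]
  rcases le_or_gt (f 0) 0 with h0 | hc0
  · -- degenerate case `f 0 = 0`: then `f` vanishes a.e., contradicting `∫ f = 1`
    have hzero : ∀ x ≤ (0:ℝ), f x = 0 := fun x hx => le_antisymm ((hside x hx).trans h0) (hnn x)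
    have hI2 : (∫ x in Iic (0:ℝ), x * f x) = 0 := by
      rw [setIntegral_congr_fun measurableSet_Iic (g := fun _ => (0:ℝ))
        (fun x hx => by simp [hzero x hx])]
      simp
    have hI3 : (∫ x in Ioi (0:ℝ), x * f x) = 0 := by linarith
    have hae : (fun x => x * f x) =ᵐ[volume.restrict (Ioi (0:ℝ))] 0 := by
      refine (integral_eq_zero_iff_of_nonneg_ae ?_ hIntX.integrableOn).1 hI3
      refine (ae_restrict_iff' measurableSet_Ioi).2 (ae_of_all _ fun x hx => ?_)
      exact mul_nonneg (le_of_lt hx) (hnn x)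
    have hfae : f =ᵐ[volume.restrict (Ioi (0:ℝ))] 0 := by
      filter_upwards [hae, ae_restrict_mem measurableSet_Ioi] with x h1 h2
      rcases mul_eq_zero.1 h1 with h | h
      · exact absurd h (ne_of_gt h2)
      · exact h
    have hI4 : (∫ x in Ioi (0:ℝ), f x) = 0 := by
      rw [integral_congr_ae hfae]; simp
    have hI5 : (∫ x in Iic (0:ℝ), f x) = 0 := by
      rw [setIntegral_congr_fun measurableSet_Iic (g := fun _ => (0:ℝ))
        (fun x hx => by simp [hzero x hx])]
      simp
    rw [hI4, hI5] at hsplitF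
    norm_num at hsplitF
  -- now `0 < f 0`
  set c := f 0 with hcdef
  -- STEP U : every value on the right is at most `e * c`
  have stepU : ∀ u : ℝ, 0 < u → f u ≤ Real.exp 1 * c := by
    intro u hu
    rcases le_or_gt (f u) c with hfu | hfu
    · have h1 : (1:ℝ) ≤ Real.exp 1 := by
        have := Real.add_one_le_exp (1:ℝ)
        linarith
      nlinarith
    · -- the exponential chord
      set s : ℝ := (Real.log (f u) - Real.log c) / u with hsdef
      have hfu0 : 0 < f u := lt_trans hc0 hfu
      have hs : 0 < s := by
        apply div_pos _ hu
        have := Real.log_lt_log hc0 hfu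
        linarith
      have hlogu : Real.log (f u) = Real.log c + s * u := by
        rw [hsdef, div_mul_cancel₀ _ (ne_of_gt hu)]; ring
      -- left envelope
      have env_left : ∀ x ≤ (0:ℝ), f x ≤ c * Real.exp (s * x) := by
        intro x hx
        rcases (hnn x).eq_or_lt with hfx | hfx
        · have : (0:ℝ) < c * Real.exp (s * x) := by positivity
          linarith [this, hfx]
        · have hux : (0:ℝ) < u - x := by linarith
          set θ : ℝ := u / (u - x) with hθdef
          have hθ0 : 0 < θ := div_pos hu hux
          have hθ1 : θ ≤ 1 := by
            rw [hθdef, div_le_one hux]; linarith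
          have hcomb : θ * x + (1 - θ) * u = 0 := by
            rw [hθdef]; field_simp; ring
          have h := hlc x u θ (le_of_lt hθ0) hθ1
          rw [hcomb] at h
          rw [Real.rpow_def_of_pos hfx, Real.rpow_def_of_pos hfu0, ← Real.exp_add] at h
          have hlog : Real.log (f x) * θ + Real.log (f u) * (1 - θ) ≤ Real.log c :=
            (Real.le_log_iff_exp_le hc0).2 h
          have e1 : (Real.log c + s * x) * θ = Real.log c - Real.log (f u) * (1 - θ) := by
            rw [hlogu]; linear_combination s * hcomb
          have hkey : Real.log (f x) * θ ≤ (Real.log c + s * x) * θ := by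
            rw [e1]; linarith
          have hlog2 : Real.log (f x) ≤ Real.log c + s * x :=
            le_of_mul_le_mul_right hkey hθ0
          calc f x = Real.exp (Real.log (f x)) := (Real.exp_log hfx).symm
            _ ≤ Real.exp (Real.log c + s * x) := Real.exp_le_exp.2 hlog2
            _ = c * Real.exp (s * x) := by rw [Real.exp_add, Real.exp_log hc0]
      -- middle envelope
      have env_mid : ∀ x, 0 ≤ x → x ≤ u → c * Real.exp (s * x) ≤ f x := by
        intro x hx0 hxu
        set θ : ℝ := x / u with hθdef
        have hθ0 : 0 ≤ θ := div_nonneg hx0 (le_of_lt hu)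
        have hθ1 : θ ≤ 1 := by rw [hθdef, div_le_one hu]; exact hxu
        have hcomb : θ * u + (1 - θ) * 0 = x := by
          rw [hθdef]; field_simp; ring
        have h := hlc u 0 θ hθ0 hθ1
        rw [hcomb] at h
        rw [Real.rpow_def_of_pos hfu0, Real.rpow_def_of_pos hc0, ← Real.exp_add] at h
        have e1 : Real.log (f u) * θ + Real.log c * (1 - θ) = Real.log c + s * x := by
          rw [hlogu]
          have hxθ : θ * u = x := by rw [hθdef]; field_simp
          linear_combination s * hxθ
        rw [e1, Real.exp_add, Real.exp_log hc0] at h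
        exact h
      -- comparison of the two halves of the mean
      obtain ⟨Jint, Jval⟩ := OneDimIsoAux.exp_moment c s hc0 hs
      have hM_le : (∫ x in Iic (0:ℝ), (-x) * f x) ≤ c / s^2 := by
        have envInt : IntegrableOn (fun x => (-x) * (c * Real.exp (s * x))) (Iic (0:ℝ)) := by
          have hemb : MeasurableEmbedding (fun x : ℝ => -x) :=
            (Homeomorph.neg ℝ).isClosedEmbedding.measurableEmbedding
          have hmp : MeasurePreserving (fun x : ℝ => -x)
              (volume : Measure ℝ) (volume : Measure ℝ) :=
            Measure.measurePreserving_neg _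
          have h1 := (hmp.integrableOn_comp_preimage hemb
            (f := fun y => y * (c * Real.exp (-(s*y)))) (s := Ioi (0:ℝ))).2 Jint
          have hpre : (fun x : ℝ => -x) ⁻¹' (Ioi (0:ℝ)) = Iio (0:ℝ) := by
            ext x; simp
          rw [hpre] at h1
          have h2 : IntegrableOn (fun x => (-x) * (c * Real.exp (s * x))) (Iio (0:ℝ)) := by
            apply h1.congr_fun _ measurableSet_Iio
            intro x _
            simp only [Function.comp]
            ring_nf
          rwa [integrableOn_Iic_iff_integrableOn_Iio]
        have lhsInt : IntegrableOn (fun x => (-x) * f x) (Iic (0:ℝ)) := by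
          have h := hIntX.neg.integrableOn (s := Iic (0:ℝ))
          apply h.congr_fun _ measurableSet_Iic
          intro x _
          simp only [Pi.neg_apply]
          ring
        have hmono := setIntegral_mono_on lhsInt envInt measurableSet_Iic
          (fun x hx => by
            have := env_left x hx
            have hx' : (0:ℝ) ≤ -x := by simpa using hx
            exact mul_le_mul_of_nonneg_left this hx')
        have hval : (∫ x in Iic (0:ℝ), (-x) * (c * Real.exp (s * x))) = c / s^2 := by
          have h := integral_comp_neg_Iic (0:ℝ) (fun y => y * (c * Real.exp (-(s*y))))
          rw [neg_zero] at h
          have heq : (fun x : ℝ => (fun y => y * (c * Real.exp (-(s*y)))) (-x))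
              = fun x : ℝ => (-x) * (c * Real.exp (s * x)) := by
            funext x; simp only; ring_nf
          rw [heq] at h
          rw [h, Jval]
        rw [← hval]
        exact hmono
      have hM_ge : c * ((u/s) * Real.exp (s*u) - Real.exp (s*u)/s^2 + 1/s^2)
          ≤ ∫ x in Ioi (0:ℝ), x * f x := by
        have hcont : Continuous (fun t : ℝ => t * (c * Real.exp (s*t))) := by fun_prop
        have step1 : (∫ x in Ioc (0:ℝ) u, x * f x) ≤ ∫ x in Ioi (0:ℝ), x * f x := by
          apply setIntegral_mono_set hIntX.integrableOn
          · exact (ae_restrict_iff' measurableSet_Ioi).2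
              (ae_of_all _ fun x hx => mul_nonneg (le_of_lt hx) (hnn x))
          · exact HasSubset.Subset.eventuallyLE Ioc_subset_Ioi_self
        have step2 : (∫ x in Ioc (0:ℝ) u, x * (c * Real.exp (s*x)))
            ≤ ∫ x in Ioc (0:ℝ) u, x * f x := by
          apply setIntegral_mono_on (hcont.integrableOn_Ioc) hIntX.integrableOn
            measurableSet_Ioc
          intro x hx
          exact mul_le_mul_of_nonneg_left (env_mid x (le_of_lt hx.1) hx.2) (le_of_lt hx.1)
        have hd : ∀ y : ℝ, HasDerivAt
            (fun t => c * ((t/s) * Real.exp (s*t) - Real.exp (s*t)/s^2))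
            (y * (c * Real.exp (s*y))) y := by
          intro y
          have h1 : HasDerivAt (fun t : ℝ => t/s) (1/s) y := (hasDerivAt_id y).div_const s
          have h3 : HasDerivAt (fun t : ℝ => s*t) s y := by
            simpa using ((hasDerivAt_id y).const_mul s)
          have h2 : HasDerivAt (fun t : ℝ => Real.exp (s*t)) (Real.exp (s*y) * s) y := h3.exp
          have h4 := h1.mul h2
          have h5 := h2.div_const (s^2)
          have h6 := (h4.sub h5).const_mul c
          refine h6.congr_deriv ?_
          have hs' : s ≠ 0 := ne_of_gt hs
          field_simp
          ring
        have step3 : (∫ x in Ioc (0:ℝ) u, x * (c * Real.exp (s*x)))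
            = c * ((u/s) * Real.exp (s*u) - Real.exp (s*u)/s^2 + 1/s^2) := by
          rw [← intervalIntegral.integral_of_le (le_of_lt hu)]
          rw [intervalIntegral.integral_eq_sub_of_hasDerivAt (fun y _ => hd y)
            (hcont.intervalIntegrable 0 u)]
          simp only [mul_zero, Real.exp_zero, zero_div]
          ring
        rw [← step3]
        linarith
      have hMM : (∫ x in Ioi (0:ℝ), x * f x) = ∫ x in Iic (0:ℝ), (-x) * f x := by
        have hneg : (∫ x in Iic (0:ℝ), (-x) * f x) = -∫ x in Iic (0:ℝ), x * f x := by
          simp only [neg_mul]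
          exact integral_neg _
        rw [hneg]
        linarith
      -- conclude s*u ≤ 1
      have hsu : s * u ≤ 1 := by
        have h1 : c * ((u/s) * Real.exp (s*u) - Real.exp (s*u)/s^2 + 1/s^2) ≤ c / s^2 := by
          rw [← hMM] at hM_le
          linarith
        have hexp : 0 < Real.exp (s*u) := Real.exp_pos _
        have hs2 : 0 < s^2 := by positivity
        have h1' : c * ((u/s) * Real.exp (s*u) - Real.exp (s*u)/s^2 + 1/s^2)
            ≤ c * (1/s^2) := by rw [mul_one_div]; exact h1
        have h2 := le_of_mul_le_mul_left h1' hc0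
        have h2a : (u/s) * Real.exp (s*u) ≤ Real.exp (s*u) / s^2 := by linarith
        have h2b : (u * Real.exp (s*u)) / s ≤ Real.exp (s*u) / s^2 := by
          rw [div_mul_eq_mul_div] at h2a
          exact h2a
        rw [div_le_div_iff₀ hs hs2] at h2b
        have h3 : (u * s^2) * Real.exp (s*u) ≤ s * Real.exp (s*u) := by
          nlinarith [h2b]
        have h4 : u * s^2 ≤ s := le_of_mul_le_mul_right h3 hexp
        have h5 : (s * u) * s ≤ 1 * s := by nlinarith [h4]
        exact le_of_mul_le_mul_right h5 hs
      have hlog : Real.log (f u) ≤ Real.log c + 1 := by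
        rw [hlogu]; linarith
      have := (Real.log_le_iff_le_exp hfu0).1 hlog
      rw [Real.exp_add, Real.exp_log hc0] at this
      linarith [this]
  -- STEP V : bathtub contradiction with the variance
  apply bathtub f hnn hInt hIntX hIntX2 hprob hmean hvar c (le_of_lt hc0) hc
  intro x
  by_cases hx : x ≤ 0
  · simp only [if_pos hx]
    exact hside x hx
  · simp only [if_neg hx]
    exact stepU x (not_le.1 hx)

end OneDimIsoAux

/-- An isotropic one-dimensional logconcave probability density (mean `0`,
variance `1`) satisfies `f 0 ≥ 1/8`. -/
theorem one_dim_isotropic_logconcave_density_at_zero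
    (f : ℝ → ℝ)
    (hnn : ∀ x, 0 ≤ f x)
    (hlc : ∀ x y : ℝ, ∀ θ : ℝ, 0 ≤ θ → θ ≤ 1 →
      f x ^ θ * f y ^ (1 - θ) ≤ f (θ * x + (1 - θ) * y))
    (hprob : (∫ x, f x) = 1)
    (hmean : (∫ x, x * f x) = 0)
    (hvar : (∫ x, x ^ 2 * f x) = 1) :
    1 / 8 ≤ f 0 := by
  by_contra hlt
  push_neg at hlt
  have hdich : (∀ x ≤ (0:ℝ), f x ≤ f 0) ∨ (∀ x : ℝ, 0 ≤ x → f x ≤ f 0) := by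
    by_contra h
    push_neg at h
    obtain ⟨⟨a, ha0, hfa⟩, ⟨b, hb0, hfb⟩⟩ := h
    have ha : a < 0 := by
      rcases ha0.lt_or_eq with h' | h'
      · exact h'
      · rw [h'] at hfa; exact absurd hfa (lt_irrefl _)
    have hb : 0 < b := by
      rcases hb0.lt_or_eq with h' | h'
      · exact h'
      · rw [← h'] at hfb; exact absurd hfb (lt_irrefl _)
    have hba : 0 < b - a := by linarith
    set θ : ℝ := b / (b - a) with hθdef
    have hθ0 : 0 < θ := div_pos hb hba
    have hθ1 : θ < 1 := by
      rw [hθdef, div_lt_one hba]; linarith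
    have hcomb : θ * a + (1 - θ) * b = 0 := by
      rw [hθdef]; field_simp; ring
    have h := hlc a b θ (le_of_lt hθ0) (le_of_lt hθ1)
    rw [hcomb] at h
    rcases (hnn 0).eq_or_lt with h0 | h0
    · have hfa' : 0 < f a := by rw [← h0] at hfa; exact hfa
      have hfb' : 0 < f b := by rw [← h0] at hfb; exact hfb
      have h1 : 0 < f a ^ θ * f b ^ (1 - θ) :=
        mul_pos (Real.rpow_pos_of_pos hfa' _) (Real.rpow_pos_of_pos hfb' _)
      rw [← h0] at h
      linarith
    · have h2 : f 0 ^ θ < f a ^ θ := Real.rpow_lt_rpow (hnn 0) hfa hθ0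
      have h3 : f 0 ^ (1 - θ) ≤ f b ^ (1 - θ) :=
        Real.rpow_le_rpow (hnn 0) (le_of_lt hfb) (by linarith)
      have p1 : 0 < f 0 ^ (1 - θ) := Real.rpow_pos_of_pos h0 _
      have p2 : 0 < f 0 ^ θ := Real.rpow_pos_of_pos h0 _
      have h4 : f 0 ^ θ * f 0 ^ (1 - θ) < f a ^ θ * f b ^ (1 - θ) := by
        nlinarith
      have h5 : f 0 ^ θ * f 0 ^ (1 - θ) = f 0 := by
        rw [← Real.rpow_add h0]; norm_num
      linarith
  rcases hdich with hL | hR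
  · exact absurd (OneDimIsoAux.key f hnn hlc hprob hmean hvar hlt hL) not_false
  · set g : ℝ → ℝ := fun x => f (-x) with hgdef
    have hnn' : ∀ x, 0 ≤ g x := fun x => hnn _
    have hlc' : ∀ x y : ℝ, ∀ θ : ℝ, 0 ≤ θ → θ ≤ 1 →
        g x ^ θ * g y ^ (1 - θ) ≤ g (θ * x + (1 - θ) * y) := by
      intro x y θ h1 h2
      have h := hlc (-x) (-y) θ h1 h2
      have e : θ * -x + (1 - θ) * -y = -(θ * x + (1 - θ) * y) := by ring
      rw [e] at h
      exact h
    have hprob' : (∫ x, g x) = 1 := by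
      rw [hgdef]
      rw [OneDimIsoAux.integral_comp_neg' f]
      exact hprob
    have hmean' : (∫ x, x * g x) = 0 := by
      have heq : (fun x => x * g x) = fun x => (fun y => -(y * f y)) (-x) := by
        funext x
        show x * f (-x) = -(-x * f (-x))
        ring
      rw [heq, OneDimIsoAux.integral_comp_neg' (fun y => -(y * f y)), integral_neg, hmean,
        neg_zero]
    have hvar' : (∫ x, x ^ 2 * g x) = 1 := by
      have heq : (fun x => x ^ 2 * g x) = fun x => (fun y => y ^ 2 * f y) (-x) := by
        funext x
        show x ^ 2 * f (-x) = (-x) ^ 2 * f (-x)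
        ring
      rw [heq, OneDimIsoAux.integral_comp_neg' (fun y => y ^ 2 * f y)]
      exact hvar
    have hc' : g 0 < 1/8 := by
      simp only [hgdef, neg_zero]
      exact hlt
    have hside' : ∀ x ≤ (0:ℝ), g x ≤ g 0 := by
      intro x hx
      simp only [hgdef, neg_zero]
      exact hR (-x) (neg_nonneg.2 hx)
    exact absurd (OneDimIsoAux.key g hnn' hlc' hprob' hmean' hvar' hc' hside') not_false

end
end

section
/- The support of any s-isotropic logconcave distribution on ℝⁿ contains a Euclidean ball of radius 1/(e·√s) centered at its mean. -/
open MeasureTheory Set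
open scoped ENNReal Pointwise

noncomputable section

/-- A probability measure on a real vector space is logconcave if it satisfies the
Prékopa–Leindler-type inequality `μ(λA + (1-λ)B) ≥ μ(A)^λ μ(B)^{1-λ}`. -/
def IsLogConcaveMeasure {E : Type*} [NormedAddCommGroup E] [NormedSpace ℝ E]
    [MeasurableSpace E] (μ : Measure E) : Prop :=
  ∀ A B : Set E, MeasurableSet A → MeasurableSet B → ∀ l : ℝ, 0 < l → l < 1 →
    μ A ^ l * μ B ^ (1 - l) ≤ μ (l • A + (1 - l) • B)


lemma tail_lintegral_sq_le {H : ℝ → ℝ≥0∞} (Hmeas : Measurable H)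
    (Hsub : ∀ u w : ℝ, 0 < u → 0 < w → H (u + w) ≤ H u * H w) :
    ∫⁻ t in Set.Ioi (0:ℝ), H t * ENNReal.ofReal t ≤ (∫⁻ t in Set.Ioi (0:ℝ), H t) ^ 2 := by
  set f : ℝ → ℝ → ℝ≥0∞ := fun u t => if 0 < u ∧ u < t then H t else 0 with hf
  have hmf : Measurable (Function.uncurry f) := by
    apply Measurable.ite
    · exact (measurableSet_lt measurable_const measurable_fst).inter
        (measurableSet_lt measurable_fst measurable_snd)
    · exact Hmeas.comp measurable_snd
    · exact measurable_const
  -- first: ∫⁻ t in Ioi 0, H t * ofReal t = ∫⁻ t, ∫⁻ u, f u t du dt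
  have h1 : ∫⁻ t in Set.Ioi (0:ℝ), H t * ENNReal.ofReal t
      = ∫⁻ t, ∫⁻ u, f u t := by
    rw [← lintegral_indicator measurableSet_Ioi]
    apply lintegral_congr fun t => ?_
    have : ∀ u, f u t = (Ioo (0:ℝ) t).indicator (fun _ => H t) u := by
      intro u
      simp only [hf, indicator, mem_Ioo]
    simp_rw [this]
    rw [lintegral_indicator measurableSet_Ioo, setLIntegral_const, Real.volume_Ioo]
    by_cases ht : 0 < t
    · rw [Set.indicator_of_mem (Set.mem_Ioi.mpr ht)]
      simp
    · rw [Set.indicator_of_notMem (by simpa using ht)]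
      have : ENNReal.ofReal (t - 0) = 0 := by
        simp [ENNReal.ofReal_eq_zero]; linarith [not_lt.mp ht]
      simp [this, Or.inr (not_lt.mp ht)]
  -- swap
  have h2 : ∫⁻ t, ∫⁻ u, f u t = ∫⁻ u, ∫⁻ t, f u t := by
    exact (lintegral_lintegral_swap hmf.aemeasurable).symm
  -- inner: for u > 0, ∫⁻ t, f u t = ∫⁻ w in Ioi 0, H (u + w)
  have h3 : ∫⁻ u, ∫⁻ t, f u t = ∫⁻ u in Set.Ioi (0:ℝ), ∫⁻ w in Set.Ioi (0:ℝ), H (u + w) := by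
    rw [← lintegral_indicator measurableSet_Ioi]
    apply lintegral_congr fun u => ?_
    by_cases hu : 0 < u
    · rw [Set.indicator_of_mem (Set.mem_Ioi.mpr hu)]
      have : ∀ t, f u t = (Ioi u).indicator H t := by
        intro t; simp only [hf, indicator, mem_Ioi, hu, true_and]
      simp_rw [this]
      rw [lintegral_indicator measurableSet_Ioi]
      have hmp := measurePreserving_add_left (volume : Measure ℝ) u
      have := hmp.setLIntegral_comp_preimage_emb (measurableEmbedding_addLeft u) H (Ioi u)
      have hpre : (fun x => u + x) ⁻¹' (Ioi u) = Ioi 0 := by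
        ext w; simp [mem_Ioi]
      rw [hpre] at this
      rw [← this]
    · rw [Set.indicator_of_notMem (by simpa using hu)]
      have : ∀ t, f u t = 0 := by intro t; simp [hf, hu]
      simp_rw [this]
      simp
  -- bound by product
  have h4 : ∫⁻ u in Set.Ioi (0:ℝ), ∫⁻ w in Set.Ioi (0:ℝ), H (u + w)
      ≤ ∫⁻ u in Set.Ioi (0:ℝ), ∫⁻ w in Set.Ioi (0:ℝ), H u * H w := by
    refine lintegral_mono_ae ?_
    rw [ae_restrict_iff' measurableSet_Ioi]
    refine .of_forall fun u hu => ?_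
    refine lintegral_mono_ae ?_
    rw [ae_restrict_iff' measurableSet_Ioi]
    exact .of_forall fun w hw => Hsub u w hu hw
  have h5 : ∫⁻ u in Set.Ioi (0:ℝ), ∫⁻ w in Set.Ioi (0:ℝ), H u * H w
      = (∫⁻ t in Set.Ioi (0:ℝ), H t) ^ 2 := by
    have : ∀ u, ∫⁻ w in Set.Ioi (0:ℝ), H u * H w = H u * ∫⁻ w in Set.Ioi (0:ℝ), H w := by
      intro u; rw [lintegral_const_mul _ Hmeas]
    simp_rw [this]
    rw [lintegral_mul_const _ Hmeas, sq]
  calc ∫⁻ t in Set.Ioi (0:ℝ), H t * ENNReal.ofReal t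
      = ∫⁻ u in Set.Ioi (0:ℝ), ∫⁻ w in Set.Ioi (0:ℝ), H (u + w) := by rw [h1, h2, h3]
    _ ≤ _ := h4.trans_eq h5


lemma sq_moment_le {α : Type*} [MeasurableSpace α] (μ : Measure α) [IsProbabilityMeasure μ]
    {W : α → ℝ} (hWm : Measurable W) (hpos : ∀ᵐ x ∂μ, 0 < W x)
    (hint2 : Integrable (fun x => W x ^ 2) μ)
    (Hsub : ∀ u w : ℝ, 0 < u → 0 < w →
      μ {x | u + w < W x} ≤ μ {x | u < W x} * μ {x | w < W x}) :
    ∫ x, W x ^ 2 ∂μ ≤ 2 * (∫ x, W x ∂μ) ^ 2 := by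
  set H : ℝ → ℝ≥0∞ := fun t => μ {x | t < W x} with hH
  have Hanti : Antitone H := fun a b hab =>
    measure_mono fun x hx => lt_of_le_of_lt hab hx
  have Hmeas : Measurable H := Hanti.measurable
  have hWnn : 0 ≤ᵐ[μ] W := hpos.mono fun x h => h.le
  have hWint : Integrable W μ :=
    ((memLp_two_iff_integrable_sq hWm.aestronglyMeasurable).mpr hint2).integrable one_le_two
  -- first moment
  have E1 : ENNReal.ofReal (∫ x, W x ∂μ) = ∫⁻ t in Set.Ioi (0:ℝ), H t := by
    rw [ofReal_integral_eq_lintegral_ofReal hWint hWnn,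
      lintegral_eq_lintegral_meas_lt μ hWnn hWm.aemeasurable]
  -- second moment via layercake with g t = 2 t
  have hg : ∀ x : ℝ, ∫ t in (0:ℝ)..x, 2 * t = x ^ 2 := by
    intro x
    rw [intervalIntegral.integral_const_mul, integral_id]
    ring
  have E2 : ENNReal.ofReal (∫ x, W x ^ 2 ∂μ)
      = ∫⁻ t in Set.Ioi (0:ℝ), H t * ENNReal.ofReal (2 * t) := by
    rw [ofReal_integral_eq_lintegral_ofReal hint2 (hWnn.mono fun x h => sq_nonneg _)]
    have := lintegral_comp_eq_lintegral_meas_lt_mul μ (g := fun t => 2 * t) hWnn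
      hWm.aemeasurable (fun t _ => (continuous_const.mul continuous_id).intervalIntegrable 0 t)
      (ae_restrict_of_forall_mem measurableSet_Ioi fun t ht => by have := Set.mem_Ioi.mp ht; positivity)
    simp_rw [hg] at this
    exact this
  have E2' : ENNReal.ofReal (∫ x, W x ^ 2 ∂μ)
      = 2 * ∫⁻ t in Set.Ioi (0:ℝ), H t * ENNReal.ofReal t := by
    rw [E2, ← lintegral_const_mul' _ _ (by norm_num : (2:ℝ≥0∞) ≠ ⊤)]
    apply lintegral_congr fun t => ?_
    rw [ENNReal.ofReal_mul (by norm_num : (0:ℝ) ≤ 2)]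
    rw [ENNReal.ofReal_ofNat]
    ring
  have key := tail_lintegral_sq_le Hmeas Hsub
  have : ENNReal.ofReal (∫ x, W x ^ 2 ∂μ) ≤ ENNReal.ofReal (2 * (∫ x, W x ∂μ) ^ 2) := by
    rw [E2']
    calc 2 * ∫⁻ t in Set.Ioi (0:ℝ), H t * ENNReal.ofReal t
        ≤ 2 * (∫⁻ t in Set.Ioi (0:ℝ), H t) ^ 2 := by gcongr
      _ = ENNReal.ofReal (2 * (∫ x, W x ∂μ) ^ 2) := by
          rw [ENNReal.ofReal_mul (by norm_num : (0:ℝ) ≤ 2), ENNReal.ofReal_ofNat,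
            ENNReal.ofReal_pow (integral_nonneg_of_ae hWnn), E1]
  exact (ENNReal.ofReal_le_ofReal_iff (by positivity)).mp this


set_option maxHeartbeats 1000000 in
/-- The support of an `s`-isotropic logconcave distribution on `ℝⁿ` contains a
ball of radius `1/(e √s)` centered at its mean: every point of that ball has all its
neighborhoods of positive measure. -/
theorem logconcave_support_contains_ball (n : ℕ) (s : ℝ) (hs : 1 ≤ s)
    (P : Measure (EuclideanSpace ℝ (Fin n))) [IsProbabilityMeasure P]
    (hlc : IsLogConcaveMeasure P)
    (m : EuclideanSpace ℝ (Fin n)) (hm : m = ∫ x, x ∂P)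
    (hiso : ∀ v : EuclideanSpace ℝ (Fin n),
      s⁻¹ * ‖v‖ ^ 2 ≤ (∫ x, (inner ℝ v (x - m) : ℝ) ^ 2 ∂P) ∧
      (∫ x, (inner ℝ v (x - m) : ℝ) ^ 2 ∂P) ≤ s * ‖v‖ ^ 2) :
    Metric.ball m (1 / (Real.exp 1 * Real.sqrt s)) ⊆
      {y | ∀ ε : ℝ, 0 < ε → 0 < P (Metric.ball y ε)} := by
  intro y hy
  intro ε hε
  by_contra hP0'
  have hs0 : (0:ℝ) < s := lt_of_lt_of_le one_pos hs
  have hsq : (0:ℝ) < Real.sqrt s := Real.sqrt_pos.mpr hs0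
  have he : (0:ℝ) < Real.exp 1 := Real.exp_pos 1
  set r : ℝ := 1 / (Real.exp 1 * Real.sqrt s) with hrdef
  have hr : 0 < r := by positivity
  set S : Set (EuclideanSpace ℝ (Fin n)) :=
    {x | ∀ δ : ℝ, 0 < δ → 0 < P (Metric.ball x δ)} with hSdef
  -- convexity of the support set
  have hSconv : Convex ℝ S := by
    intro x₁ hx₁ x₂ hx₂ a b ha hb hab
    rcases ha.eq_or_lt with h | ha0
    · have hb1 : b = 1 := by linarith
      rw [← h, hb1]
      simpa using hx₂
    rcases hb.eq_or_lt with h | hb0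
    · have ha1 : a = 1 := by linarith
      rw [← h, ha1]
      simpa using hx₁
    intro δ hδ
    have hsum : a • Metric.ball x₁ δ + b • Metric.ball x₂ δ ⊆
        Metric.ball (a • x₁ + b • x₂) δ := by
      rintro z ⟨_, ⟨p, hp, rfl⟩, _, ⟨q, hq, rfl⟩, rfl⟩
      rw [Metric.mem_ball, dist_eq_norm]
      have hp' : ‖p - x₁‖ < δ := by rw [← dist_eq_norm]; exact Metric.mem_ball.mp hp
      have hq' : ‖q - x₂‖ < δ := by rw [← dist_eq_norm]; exact Metric.mem_ball.mp hq
      have h1 : a • p + b • q - (a • x₁ + b • x₂) = a • (p - x₁) + b • (q - x₂) := by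
        rw [smul_sub, smul_sub]; abel
      rw [h1]
      calc ‖a • (p - x₁) + b • (q - x₂)‖ ≤ ‖a • (p - x₁)‖ + ‖b • (q - x₂)‖ := norm_add_le _ _
        _ = a * ‖p - x₁‖ + b * ‖q - x₂‖ := by
            rw [norm_smul, norm_smul, Real.norm_of_nonneg ha, Real.norm_of_nonneg hb]
        _ < a * δ + b * δ :=
            add_lt_add (mul_lt_mul_of_pos_left hp' ha0) (mul_lt_mul_of_pos_left hq' hb0)
        _ = δ := by rw [← add_mul, hab, one_mul]
    have hpos := hlc (Metric.ball x₁ δ) (Metric.ball x₂ δ) measurableSet_ball measurableSet_ball a ha0 (by linarith)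
    have hb' : (1:ℝ) - a = b := by linarith
    rw [hb'] at hpos
    calc (0:ℝ≥0∞) < P (Metric.ball x₁ δ) ^ a * P (Metric.ball x₂ δ) ^ b :=
          ENNReal.mul_pos (ENNReal.rpow_pos (hx₁ δ hδ) (measure_ne_top P _)).ne'
            (ENNReal.rpow_pos (hx₂ δ hδ) (measure_ne_top P _)).ne'
      _ ≤ P (a • Metric.ball x₁ δ + b • Metric.ball x₂ δ) := hpos
      _ ≤ P (Metric.ball (a • x₁ + b • x₂) δ) := measure_mono hsum
  -- closedness
  have hSclosed : IsClosed S := by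
    rw [← isOpen_compl_iff, Metric.isOpen_iff]
    intro x hx
    simp only [hSdef, mem_compl_iff, mem_setOf_eq, not_forall, not_lt] at hx
    obtain ⟨δ, hδ, hPδ⟩ := hx
    refine ⟨δ/2, by linarith, fun x' hx' => ?_⟩
    intro hx'S
    have h2 : Metric.ball x' (δ/2) ⊆ Metric.ball x δ := by
      apply Metric.ball_subset_ball'
      have := Metric.mem_ball.mp hx'
      linarith
    have hle := (measure_mono h2).trans hPδ
    exact (not_lt.mpr hle) (hx'S (δ/2) (by linarith))
  -- the support has full measure
  have hSnull : P Sᶜ = 0 := by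
    apply measure_null_of_locally_null
    intro x hx
    simp only [hSdef, mem_compl_iff, mem_setOf_eq, not_forall, not_lt] at hx
    obtain ⟨δ, hδ, hPδ⟩ := hx
    exact ⟨Metric.ball x δ, mem_nhdsWithin_of_mem_nhds (Metric.ball_mem_nhds x hδ),
      le_antisymm hPδ zero_le⟩
  have hyS : y ∉ S := fun h => hP0' (h ε hε)
  have hSne : S.Nonempty := by
    by_contra h
    rw [Set.not_nonempty_iff_eq_empty] at h
    have h2 : P Sᶜ = 1 := by rw [h, Set.compl_empty, measure_univ]
    rw [hSnull] at h2
    exact zero_ne_one h2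
  -- separation
  obtain ⟨f, u, hfu, huy⟩ := geometric_hahn_banach_closed_point hSconv hSclosed hyS
  set v : EuclideanSpace ℝ (Fin n) := (InnerProductSpace.toDual ℝ _).symm f with hvdef
  have hv : ∀ z : EuclideanSpace ℝ (Fin n), (inner ℝ v z : ℝ) = f z := fun z =>
    InnerProductSpace.toDual_symm_apply
  obtain ⟨a₀, ha₀⟩ := hSne
  have hv0 : v ≠ 0 := by
    intro h
    have e1 : f a₀ = 0 := by rw [← hv a₀, h, inner_zero_left]
    have e2 : f y = 0 := by rw [← hv y, h, inner_zero_left]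
    have h1 : f a₀ < u := hfu a₀ ha₀
    have h2 : u < f y := huy
    rw [e1] at h1; rw [e2] at h2; linarith
  have hnv : (0:ℝ) < ‖v‖ := norm_pos_iff.mpr hv0
  -- integrability facts
  have hsq2 : ∀ w : EuclideanSpace ℝ (Fin n), w ≠ 0 →
      Integrable (fun x => (inner ℝ w (x - m) : ℝ) ^ 2) P := by
    intro w hw
    by_contra hni
    have h0 := integral_undef hni
    have h1 := (hiso w).1
    rw [h0] at h1
    have hnw : (0:ℝ) < ‖w‖ := norm_pos_iff.mpr hw
    have := mul_pos (inv_pos.mpr hs0) (pow_pos hnw 2)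
    linarith
  have hxm_int : Integrable (fun x : EuclideanSpace ℝ (Fin n) => x - m) P := by
    have hcoord : ∀ i : Fin n,
        Integrable (fun x : EuclideanSpace ℝ (Fin n) => (x i - m i) ^ 2) P := by
      intro i
      have hne : (EuclideanSpace.single i (1:ℝ)) ≠ 0 := by
        intro h
        have h1 : (EuclideanSpace.single i (1:ℝ)) i = 0 := by rw [h]; rfl
        rw [EuclideanSpace.single_apply] at h1
        simp at h1
      have hI := hsq2 _ hne
      have heq : ∀ x : EuclideanSpace ℝ (Fin n),
          (inner ℝ (EuclideanSpace.single i (1:ℝ)) (x - m) : ℝ) = x i - m i := by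
        intro x
        rw [EuclideanSpace.inner_single_left]
        simp [PiLp.sub_apply]
      simp_rw [heq] at hI
      exact hI
    have hnormsq : Integrable (fun x : EuclideanSpace ℝ (Fin n) => ‖x - m‖ ^ 2) P := by
      have heq : ∀ x : EuclideanSpace ℝ (Fin n), ‖x - m‖ ^ 2 = ∑ i, (x i - m i) ^ 2 := by
        intro x
        rw [EuclideanSpace.norm_eq, Real.sq_sqrt (by positivity)]
        refine Finset.sum_congr rfl fun i _ => ?_
        rw [PiLp.sub_apply, Real.norm_eq_abs, sq_abs]
      simp_rw [heq]
      exact integrable_finset_sum _ fun i _ => hcoord i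
    have haesm : AEStronglyMeasurable (fun x : EuclideanSpace ℝ (Fin n) => x - m) P :=
      (continuous_id.sub continuous_const).aestronglyMeasurable
    exact ((memLp_two_iff_integrable_sq_norm haesm).mpr hnormsq).integrable one_le_two
  have hx_int : Integrable (fun x : EuclideanSpace ℝ (Fin n) => x) P := by
    have h2 := hxm_int.add (integrable_const m)
    have h3 : (fun x : EuclideanSpace ℝ (Fin n) => x)
        = fun x => (x - m) + m := by funext x; simp
    rw [h3]
    exact h2
  have hZint : Integrable (fun x => (inner ℝ v (x - m) : ℝ)) P :=
    (innerSL ℝ v).integrable_comp hxm_int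
  have hvx_int : Integrable (fun x => (inner ℝ v x : ℝ)) P :=
    (innerSL ℝ v).integrable_comp hx_int
  have hEZ : ∫ x, (inner ℝ v (x - m) : ℝ) ∂P = 0 := by
    have h1 : ∫ x, (inner ℝ v x : ℝ) ∂P = (inner ℝ v m : ℝ) := by
      have h2 := (innerSL ℝ v).integral_comp_comm hx_int
      rw [← hm] at h2
      exact h2
    have h3 : (fun x : EuclideanSpace ℝ (Fin n) => (inner ℝ v (x - m) : ℝ))
        = fun x => (inner ℝ v x : ℝ) - (inner ℝ v m : ℝ) := by
      funext x; rw [inner_sub_right]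
    rw [h3, integral_sub hvx_int (integrable_const _), h1, integral_const]
    simp
  -- the one-dimensional variable
  set c' : ℝ := ‖v‖ * r with hc'def
  have hc' : 0 < c' := mul_pos hnv hr
  set W : EuclideanSpace ℝ (Fin n) → ℝ := fun x => c' - (inner ℝ v (x - m) : ℝ) with hWdef
  have hWm : Measurable W :=
    (continuous_const.sub (Continuous.inner continuous_const
      (continuous_id.sub continuous_const))).measurable
  have hb : u - (inner ℝ v m : ℝ) < c' := by
    have h1 : u < (inner ℝ v y : ℝ) := by rw [hv]; exact huy
    have h2 : (inner ℝ v (y - m) : ℝ) ≤ ‖v‖ * ‖y - m‖ := real_inner_le_norm v _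
    have h3 : ‖y - m‖ < r := by
      rw [← dist_eq_norm]; exact Metric.mem_ball.mp hy
    have h4 : (inner ℝ v (y - m) : ℝ) = (inner ℝ v y : ℝ) - (inner ℝ v m : ℝ) := inner_sub_right v y m
    nlinarith
  have hpos_ae : ∀ᵐ x ∂P, 0 < W x := by
    rw [ae_iff]
    refine measure_mono_null ?_ hSnull
    intro x hx
    simp only [mem_setOf_eq, not_lt] at hx
    intro hxS
    have h1 : f x < u := hfu x hxS
    rw [← hv x] at h1
    have h4 : (inner ℝ v (x - m) : ℝ) = (inner ℝ v x : ℝ) - (inner ℝ v m : ℝ) := inner_sub_right v x m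
    have : 0 < W x := by simp only [hWdef]; linarith
    linarith
  have hW2int : Integrable (fun x => W x ^ 2) P := by
    have heq : (fun x => W x ^ 2)
        = fun x => (c'^2 - (2*c') * (inner ℝ v (x - m) : ℝ)) + (inner ℝ v (x - m) : ℝ)^2 := by
      funext x; simp only [hWdef]; ring
    rw [heq]
    exact ((integrable_const (c'^2)).sub (hZint.const_mul (2*c'))).add (hsq2 v hv0)
  have hEW : ∫ x, W x ∂P = c' := by
    simp only [hWdef]
    rw [integral_sub (integrable_const _) hZint, hEZ, integral_const]
    simp
  have hEW2 : ∫ x, W x ^ 2 ∂P = c'^2 + ∫ x, (inner ℝ v (x - m) : ℝ)^2 ∂P := by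
    have heq : (fun x => W x ^ 2)
        = fun x => (c'^2 - (2*c') * (inner ℝ v (x - m) : ℝ)) + (inner ℝ v (x - m) : ℝ)^2 := by
      funext x; simp only [hWdef]; ring
    have hint1 : Integrable (fun x => c'^2 - (2*c') * (inner ℝ v (x - m) : ℝ)) P :=
      (integrable_const (c'^2)).sub (hZint.const_mul (2*c'))
    rw [heq, integral_add hint1 (hsq2 v hv0),
      integral_sub (integrable_const _) (hZint.const_mul (2*c')),
      integral_const, integral_const_mul, hEZ]
    simp
  -- halfspace description of the tails
  set β : ℝ := c' + (inner ℝ v m : ℝ) with hβdef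
  have hset : ∀ t : ℝ, {x | t < W x}
      = {x : EuclideanSpace ℝ (Fin n) | (inner ℝ v x : ℝ) < β - t} := by
    intro t
    ext x
    simp only [hWdef, mem_setOf_eq, hβdef]
    have h4 : (inner ℝ v (x - m) : ℝ) = (inner ℝ v x : ℝ) - (inner ℝ v m : ℝ) := inner_sub_right v x m
    constructor <;> intro h <;> linarith
  have hmeasA : ∀ c : ℝ, MeasurableSet {x : EuclideanSpace ℝ (Fin n) | (inner ℝ v x : ℝ) < c} :=
    fun c => measurableSet_lt (Continuous.inner continuous_const continuous_id).measurable
      measurable_const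
  have hincl : ∀ (t₁ t₂ l : ℝ), 0 < l → l < 1 →
      l • {x : EuclideanSpace ℝ (Fin n) | (inner ℝ v x : ℝ) < β - t₁}
        + (1-l) • {x : EuclideanSpace ℝ (Fin n) | (inner ℝ v x : ℝ) < β - t₂}
      ⊆ {x : EuclideanSpace ℝ (Fin n) | (inner ℝ v x : ℝ) < β - (l*t₁ + (1-l)*t₂)} := by
    rintro t₁ t₂ l hl hl1 z ⟨_, ⟨p, hp, rfl⟩, _, ⟨q, hq, rfl⟩, rfl⟩
    simp only [mem_setOf_eq] at hp hq ⊢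
    rw [inner_add_right, real_inner_smul_right, real_inner_smul_right]
    have e1 : l * (inner ℝ v p : ℝ) < l * (β - t₁) := mul_lt_mul_of_pos_left hp hl
    have e2 : (1-l) * (inner ℝ v q : ℝ) < (1-l) * (β - t₂) :=
      mul_lt_mul_of_pos_left hq (by linarith)
    nlinarith
  have hH0 : P {x | (0:ℝ) < W x} = 1 := by
    have hnull : P {x | ¬ (0:ℝ) < W x} = 0 := ae_iff.mp hpos_ae
    refine le_antisymm prob_le_one ?_
    have hsub : (univ : Set (EuclideanSpace ℝ (Fin n)))
        ⊆ {x | (0:ℝ) < W x} ∪ {x | ¬ (0:ℝ) < W x} := by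
      intro x _
      by_cases h : (0:ℝ) < W x
      exacts [Or.inl h, Or.inr h]
    have := (measure_mono hsub).trans (measure_union_le (μ := P) {x | (0:ℝ) < W x} {x | ¬ (0:ℝ) < W x})
    rw [measure_univ, hnull, add_zero] at this
    exact this
  have Hsub : ∀ p q : ℝ, 0 < p → 0 < q →
      P {x | p + q < W x} ≤ P {x | p < W x} * P {x | q < W x} := by
    intro p q hp hq
    by_cases h0 : P {x | p + q < W x} = 0
    · rw [h0]; exact zero_le
    set t := p + q with htdef
    have ht : 0 < t := add_pos hp hq
    set l := p / t with hldef
    have hl0 : 0 < l := div_pos hp ht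
    have hl1 : l < 1 := by rw [hldef, div_lt_one ht]; linarith
    have h1 := hlc _ _ (hmeasA (β - t)) (hmeasA (β - 0)) l hl0 hl1
    have hsub1 := hincl t 0 l hl0 hl1
    have hne : t ≠ 0 := ne_of_gt ht
    have hlt : l * t = p := by rw [hldef]; field_simp
    have e1 : l * t + (1-l) * 0 = p := by linarith
    have htpq : t = p + q := htdef
    rw [e1] at hsub1
    have key1 : P {x | t < W x} ^ l * P {x | (0:ℝ) < W x} ^ (1 - l) ≤ P {x | p < W x} := by
      rw [hset t, hset (0:ℝ), hset p]
      exact h1.trans (measure_mono hsub1)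
    rw [hH0, ENNReal.one_rpow, mul_one] at key1
    have h2 := hlc _ _ (hmeasA (β - 0)) (hmeasA (β - t)) l hl0 hl1
    have hsub2 := hincl 0 t l hl0 hl1
    have e2 : l * 0 + (1-l) * t = q := by linarith
    rw [e2] at hsub2
    have key2 : P {x | (0:ℝ) < W x} ^ l * P {x | t < W x} ^ (1 - l) ≤ P {x | q < W x} := by
      rw [hset t, hset (0:ℝ), hset q]
      exact h2.trans (measure_mono hsub2)
    rw [hH0, ENNReal.one_rpow, one_mul] at key2
    calc P {x | t < W x} = P {x | t < W x} ^ l * P {x | t < W x} ^ (1 - l) := by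
          rw [← ENNReal.rpow_add l (1-l) h0 (measure_ne_top P _)]
          norm_num
      _ ≤ _ := mul_le_mul' key1 key2
  -- the moment inequality
  have hmain := sq_moment_le P hWm hpos_ae hW2int Hsub
  rw [hEW2, hEW] at hmain
  have hσ := (hiso v).1
  have hr2 : r^2 = 1 / (Real.exp 1 ^ 2 * s) := by
    rw [hrdef, div_pow, one_pow, mul_pow, Real.sq_sqrt hs0.le]
  have hc'2 : c'^2 = ‖v‖^2 * (1 / (Real.exp 1 ^ 2 * s)) := by
    rw [hc'def, mul_pow, hr2]
  have hfinal : s⁻¹ * ‖v‖^2 ≤ ‖v‖^2 * (1 / (Real.exp 1 ^ 2 * s)) := by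
    rw [← hc'2]; linarith
  have hexp : (2:ℝ) ≤ Real.exp 1 := by
    have := Real.add_one_le_exp 1; linarith
  have hN : (0:ℝ) < ‖v‖^2 := by positivity
  rw [inv_eq_one_div] at hfinal
  rw [div_mul_eq_mul_div, mul_comm, mul_one_div] at hfinal
  have h9 : ‖v‖^2 / s ≤ ‖v‖^2 / (Real.exp 1 ^ 2 * s) := by
    calc ‖v‖^2 / s = ‖v‖^2 * 1 / s := by ring
      _ ≤ _ := hfinal
  have h10 := (div_le_div_iff₀ hs0 (by positivity : (0:ℝ) < Real.exp 1 ^ 2 * s)).mp h9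
  have he4 : (4:ℝ) ≤ Real.exp 1 ^ 2 := by nlinarith
  nlinarith [mul_pos hs0 hN]
end
end

section
/- Let μ, π be probability measures on a measurable space with Markov kernel P reversible with respect to stationary distribution π. If the essential supremum over x of ‖δ_x P^k − π‖_TV is at most ε, then ‖d(νP^k)/dπ − 1‖_{L^∞(π)} ≤ 2·‖dν/dπ − 1‖_{L^∞(π)}·ε for any initial distribution ν ≪ π. -/
open MeasureTheory Set ProbabilityTheory
open scoped ENNReal

noncomputable section

/-- Total-variation distance between two measures, as the supremum over measurable sets of the
discrepancy of the measure assigned to the set. -/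
def tvDist {α : Type*} [MeasurableSpace α] (μ ν : Measure α) : ℝ :=
  ⨆ A : {A : Set α // MeasurableSet A}, |(μ A.1).toReal - (ν A.1).toReal|

namespace BoostAux

variable {α : Type*} [MeasurableSpace α]

/-- `k`-fold composition of a kernel with itself. -/
def kpow (P : Kernel α α) : ℕ → Kernel α α
  | 0 => Kernel.id
  | n + 1 => P ∘ₖ kpow P n

instance (P : Kernel α α) [IsMarkovKernel P] (k : ℕ) : IsMarkovKernel (kpow P k) := by
  induction k with
  | zero => rw [kpow]; infer_instance
  | succ n ih => rw [kpow]; infer_instance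

lemma kpow_comm (P : Kernel α α) [IsMarkovKernel P] (k : ℕ) :
    kpow P k ∘ₖ P = P ∘ₖ kpow P k := by
  induction k with
  | zero => rw [kpow, Kernel.id_comp, Kernel.comp_id]
  | succ n ih => rw [kpow, Kernel.comp_assoc, ih]

lemma iterate_bind (P : Kernel α α) [IsMarkovKernel P] (k : ℕ) (μ : Measure α) :
    (fun μ : Measure α => μ.bind (fun a => P a))^[k] μ = μ.bind (fun a => kpow P k a) := by
  induction k generalizing μ with
  | zero => simp [kpow, Kernel.id_apply, Measure.bind_dirac]
  | succ n ih =>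
      rw [Function.iterate_succ_apply', ih,
        Measure.bind_bind (kpow P n).measurable.aemeasurable P.measurable.aemeasurable]
      simp only [kpow, Kernel.comp_apply]

section Sym

variable (K : Kernel α α) [IsMarkovKernel K] (π' : Measure α) [IsProbabilityMeasure π']

lemma swap_compProd
    (h : ∀ A B : Set α, MeasurableSet A → MeasurableSet B →
      (∫⁻ x in A, K x B ∂π') = ∫⁻ x in B, K x A ∂π') :
    (π' ⊗ₘ K).map Prod.swap = π' ⊗ₘ K := by
  haveI : IsProbabilityMeasure ((π' ⊗ₘ K).map Prod.swap) :=
    Measure.isProbabilityMeasure_map measurable_swap.aemeasurable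
  refine ext_of_generate_finite _ generateFrom_prod.symm isPiSystem_prod ?_ (by simp)
  rintro s ⟨A, hA, B, hB, rfl⟩
  rw [Measure.map_apply measurable_swap ((hA : MeasurableSet A).prod hB),
    Set.preimage_swap_prod, Measure.compProd_apply_prod hB hA,
    Measure.compProd_apply_prod hA hB]
  exact h B A hB hA

lemma lintegral_swap_compProd
    (h : ∀ A B : Set α, MeasurableSet A → MeasurableSet B →
      (∫⁻ x in A, K x B ∂π') = ∫⁻ x in B, K x A ∂π')
    {F : α × α → ℝ≥0∞} (hF : Measurable F) :
    ∫⁻ p, F (p.2, p.1) ∂(π' ⊗ₘ K) = ∫⁻ p, F p ∂(π' ⊗ₘ K) := by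
  conv_rhs => rw [← swap_compProd K π' h]
  rw [lintegral_map hF measurable_swap]
  rfl

lemma flip_lintegral
    (h : ∀ A B : Set α, MeasurableSet A → MeasurableSet B →
      (∫⁻ x in A, K x B ∂π') = ∫⁻ x in B, K x A ∂π')
    {φ : α → ℝ≥0∞} (hφ : Measurable φ) {A : Set α} (hA : MeasurableSet A) :
    ∫⁻ x, φ x * K x A ∂π' = ∫⁻ x in A, ∫⁻ y, φ y ∂(K x) ∂π' := by
  have hind : Measurable (A.indicator (1 : α → ℝ≥0∞)) := measurable_one.indicator hA
  have hF : Measurable (fun p : α × α => φ p.1 * A.indicator 1 p.2) :=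
    (hφ.comp measurable_fst).mul (hind.comp measurable_snd)
  have h1 : ∫⁻ x, φ x * K x A ∂π' = ∫⁻ p, φ p.1 * A.indicator 1 p.2 ∂(π' ⊗ₘ K) := by
    rw [Measure.lintegral_compProd hF]
    refine lintegral_congr fun x => ?_
    show φ x * K x A = ∫⁻ b, φ x * A.indicator 1 b ∂(K x)
    rw [lintegral_const_mul _ hind, lintegral_indicator_one hA]
  have h2 := lintegral_swap_compProd K π' h hF
  have hF' : Measurable (fun p : α × α => φ p.2 * A.indicator 1 p.1) :=
    (hφ.comp measurable_snd).mul (hind.comp measurable_fst)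
  rw [h1, ← h2, Measure.lintegral_compProd hF', ← lintegral_indicator hA]
  refine lintegral_congr fun x => ?_
  show ∫⁻ b, φ b * A.indicator 1 x ∂(K x) = _
  rw [lintegral_mul_const _ hφ]
  by_cases hx : x ∈ A <;> simp [hx]

lemma sym_kpow (P : Kernel α α) [IsMarkovKernel P]
    (hrev : ∀ A B : Set α, MeasurableSet A → MeasurableSet B →
      (∫⁻ x in A, P x B ∂π') = ∫⁻ x in B, P x A ∂π') (k : ℕ) :
    ∀ A B : Set α, MeasurableSet A → MeasurableSet B →
      (∫⁻ x in A, kpow P k x B ∂π') = ∫⁻ x in B, kpow P k x A ∂π' := by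
  induction k with
  | zero =>
      intro A B hA hB
      simp only [kpow, Kernel.id_apply]
      rw [setLIntegral_congr_fun hA
          (fun x _ => Measure.dirac_apply' x hB),
        setLIntegral_congr_fun hB
          (fun x _ => Measure.dirac_apply' x hA),
        lintegral_indicator hB, lintegral_indicator hA]
      simp [Measure.restrict_apply, hA, hB, Set.inter_comm]
  | succ n ih =>
      intro A B hA hB
      have comp_eq : ∀ C D : Set α, MeasurableSet C → MeasurableSet D →
          ∫⁻ x in C, kpow P (n + 1) x D ∂π' = ∫⁻ x, P x D * kpow P n x C ∂π' := by
        intro C D hC hD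
        calc ∫⁻ x in C, kpow P (n + 1) x D ∂π'
            = ∫⁻ x in C, ∫⁻ y, P y D ∂(kpow P n x) ∂π' := by
              refine setLIntegral_congr_fun hC (fun x _ => ?_)
              exact Kernel.comp_apply' P (kpow P n) x hD
          _ = ∫⁻ x, (fun y => P y D) x * kpow P n x C ∂π' :=
              (flip_lintegral (kpow P n) π' ih (P.measurable_coe hD) hC).symm
      have flipP : ∀ C D : Set α, MeasurableSet C → MeasurableSet D →
          ∫⁻ x, P x D * kpow P n x C ∂π' = ∫⁻ x in D, (kpow P n ∘ₖ P) x C ∂π' := by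
        intro C D hC hD
        calc ∫⁻ x, P x D * kpow P n x C ∂π'
            = ∫⁻ x, kpow P n x C * P x D ∂π' := lintegral_congr fun x => mul_comm _ _
          _ = ∫⁻ x in D, ∫⁻ y, kpow P n y C ∂(P x) ∂π' :=
              flip_lintegral P π' hrev ((kpow P n).measurable_coe hC) hD
          _ = ∫⁻ x in D, (kpow P n ∘ₖ P) x C ∂π' :=
              (setLIntegral_congr_fun hD (fun x _ =>
                Kernel.comp_apply' (kpow P n) P x hC)).symm
      rw [comp_eq A B hA hB, flipP A B hA hB, kpow_comm]
      simp only [kpow]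

lemma bind_withDensity
    (h : ∀ A B : Set α, MeasurableSet A → MeasurableSet B →
      (∫⁻ x in A, K x B ∂π') = ∫⁻ x in B, K x A ∂π')
    {φ : α → ℝ≥0∞} (hφ : Measurable φ) :
    (π'.withDensity φ).bind (fun a => K a) =
      π'.withDensity (fun x => ∫⁻ y, φ y ∂(K x)) := by
  ext A hA
  rw [Measure.bind_apply hA K.measurable.aemeasurable,
    lintegral_withDensity_eq_lintegral_mul π' hφ (K.measurable_coe hA),
    withDensity_apply _ hA, ← flip_lintegral K π' h hφ hA]
  rfl

end Sym

lemma tv_sets {μ ρ : Measure α} [IsProbabilityMeasure μ] [IsProbabilityMeasure ρ] {ε : ℝ}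
    (h : tvDist μ ρ ≤ ε) :
    ∀ A : Set α, MeasurableSet A → |(μ A).toReal - (ρ A).toReal| ≤ ε := by
  intro A hA
  refine le_trans ?_ h
  have key : ∀ (σ : Measure α), IsProbabilityMeasure σ → ∀ s : Set α, (σ s).toReal ≤ 1 := by
    intro σ hσ s
    simpa using ENNReal.toReal_mono (by simp) (prob_le_one (μ := σ) (s := s))
  have hbdd : BddAbove (Set.range fun A : {A : Set α // MeasurableSet A} =>
      |(μ A.1).toReal - (ρ A.1).toReal|) := by
    refine ⟨2, ?_⟩
    rintro y ⟨B, rfl⟩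
    calc |(μ B.1).toReal - (ρ B.1).toReal|
        ≤ |(μ B.1).toReal| + |(ρ B.1).toReal| := abs_sub _ _
      _ ≤ 1 + 1 := by
          gcongr
          · rw [abs_of_nonneg ENNReal.toReal_nonneg]; exact key μ inferInstance _
          · rw [abs_of_nonneg ENNReal.toReal_nonneg]; exact key ρ inferInstance _
      _ = 2 := by norm_num
  exact le_ciSup hbdd ⟨A, hA⟩

lemma abs_toReal_lintegral_sub_le
    (μ ρ : Measure α) [IsProbabilityMeasure μ] [IsProbabilityMeasure ρ]
    {h : α → ℝ} (hmeas : Measurable h) {m ε : ℝ} (hm : 0 ≤ m) (hε : 0 ≤ ε)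
    (h0 : ∀ x, 0 ≤ h x) (hub : ∀ x, h x ≤ 1 + m) (hlb : ∀ x, 1 - m ≤ h x)
    (htv : ∀ A : Set α, MeasurableSet A → |(μ A).toReal - (ρ A).toReal| ≤ ε) :
    |(∫⁻ x, ENNReal.ofReal (h x) ∂μ).toReal - (∫⁻ x, ENNReal.ofReal (h x) ∂ρ).toReal|
      ≤ 2 * m * ε := by
  set c : ℝ := 1 + m with hc
  have hc0 : 0 < c := by positivity
  set l : ℝ := 1 - m with hl
  -- layer cake over the truncated interval
  have layer : ∀ (σ : Measure α), IsProbabilityMeasure σ →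
      ∫⁻ x, ENNReal.ofReal (h x) ∂σ = ∫⁻ t in Ioc 0 c, σ {a | t < h a} := by
    intro σ _
    rw [lintegral_eq_lintegral_meas_lt σ (Filter.Eventually.of_forall h0)
      hmeas.aemeasurable, ← lintegral_indicator measurableSet_Ioi,
      ← lintegral_indicator measurableSet_Ioc]
    congr 1
    funext t
    by_cases ht : t ∈ Ioc 0 c
    · rw [Set.indicator_of_mem ht, Set.indicator_of_mem (Set.mem_Ioi.mpr ht.1)]
    · by_cases ht0 : t ∈ Ioi 0
      · have hct : c < t := by
          by_contra hcon
          exact ht ⟨ht0, not_lt.mp hcon⟩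
        have hemp : {a | t < h a} = (∅ : Set α) := by
          ext a
          simp only [Set.mem_setOf_eq, Set.mem_empty_iff_false, iff_false, not_lt]
          exact (hub a).trans hct.le
        rw [Set.indicator_of_mem ht0, Set.indicator_of_notMem ht, hemp]
        simp
      · rw [Set.indicator_of_notMem ht0, Set.indicator_of_notMem ht]
  have hmono : ∀ (σ : Measure α), Measurable fun t : ℝ => σ {a | t < h a} := by
    intro σ
    exact Antitone.measurable fun s t hst =>
      measure_mono fun a (ha : t < h a) => lt_of_le_of_lt hst ha
  have hfin : ∀ (σ : Measure α) (t : ℝ), IsProbabilityMeasure σ →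
      σ {a | t < h a} ≠ ∞ := fun σ t _ => measure_ne_top σ _
  have conv : ∀ (σ : Measure α), IsProbabilityMeasure σ →
      (∫⁻ t in Ioc 0 c, σ {a | t < h a}).toReal
        = ∫ t in Ioc 0 c, (σ {a | t < h a}).toReal := by
    intro σ hσ
    exact (integral_toReal (hmono σ).aemeasurable
      (Filter.Eventually.of_forall fun t => (hfin σ t hσ).lt_top)).symm
  haveI : IsFiniteMeasure (volume.restrict (Ioc 0 c)) := by
    constructor
    rw [Measure.restrict_apply_univ, Real.volume_Ioc]
    exact ENNReal.ofReal_lt_top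
  have toReal_le_one : ∀ (σ : Measure α), IsProbabilityMeasure σ → ∀ s : Set α,
      (σ s).toReal ≤ 1 := by
    intro σ hσ s
    have := ENNReal.toReal_mono (by simp) (prob_le_one (μ := σ) (s := s))
    simpa using this
  have hinteg : ∀ (σ : Measure α), IsProbabilityMeasure σ →
      Integrable (fun t => (σ {a | t < h a}).toReal) (volume.restrict (Ioc 0 c)) := by
    intro σ hσ
    refine ⟨((hmono σ).ennreal_toReal).aestronglyMeasurable, ?_⟩
    refine HasFiniteIntegral.of_bounded (C := 1) (Filter.Eventually.of_forall fun t => ?_)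
    rw [Real.norm_eq_abs, abs_of_nonneg ENNReal.toReal_nonneg]
    exact toReal_le_one σ hσ _
  set F : ℝ → ℝ := fun t => (μ {a | t < h a}).toReal with hF
  set G : ℝ → ℝ := fun t => (ρ {a | t < h a}).toReal with hG
  have hFi : Integrable F (volume.restrict (Ioc 0 c)) := hinteg μ inferInstance
  have hGi : Integrable G (volume.restrict (Ioc 0 c)) := hinteg ρ inferInstance
  set B : ℝ → ℝ := (Ici l).indicator fun _ => ε with hB
  have hBi : Integrable B (volume.restrict (Ioc 0 c)) :=
    (integrable_const ε).indicator measurableSet_Ici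
  have hptwise : ∀ t : ℝ, |F t - G t| ≤ B t := by
    intro t
    by_cases htl : l ≤ t
    · have : B t = ε := Set.indicator_of_mem htl _
      rw [this]
      exact htv _ (hmeas measurableSet_Ioi)
    · have huniv : {a | t < h a} = (Set.univ : Set α) := by
        ext a
        simp only [Set.mem_setOf_eq, Set.mem_univ, iff_true]
        exact lt_of_lt_of_le (not_le.mp htl) (hlb a)
      have : B t = 0 := Set.indicator_of_notMem htl _
      rw [this, hF, hG]
      simp [huniv]
  calc |(∫⁻ x, ENNReal.ofReal (h x) ∂μ).toReal - (∫⁻ x, ENNReal.ofReal (h x) ∂ρ).toReal|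
      = |∫ t in Ioc 0 c, (F t - G t)| := by
        rw [layer μ inferInstance, layer ρ inferInstance, conv μ inferInstance,
          conv ρ inferInstance, integral_sub hFi hGi]
    _ ≤ ∫ t in Ioc 0 c, |F t - G t| := by
        rw [← Real.norm_eq_abs]
        exact (norm_integral_le_integral_norm _).trans (le_of_eq (by simp [Real.norm_eq_abs]))
    _ ≤ ∫ t in Ioc 0 c, B t := integral_mono (hFi.sub hGi).abs hBi hptwise
    _ = (volume.restrict (Ioc 0 c) (Ici l)).toReal * ε := by
        rw [hB, integral_indicator_const ε measurableSet_Ici, smul_eq_mul]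
        rfl
    _ ≤ 2 * m * ε := by
        refine mul_le_mul_of_nonneg_right ?_ hε
        have hsub : Ici l ∩ Ioc 0 c ⊆ Icc (max l 0) c := by
          rintro t ⟨h1, h2, h3⟩
          exact ⟨max_le h1 h2.le, h3⟩
        have hvol : volume.restrict (Ioc 0 c) (Ici l) ≤ ENNReal.ofReal (2 * m) := by
          rw [Measure.restrict_apply measurableSet_Ici]
          refine (measure_mono hsub).trans ?_
          rw [Real.volume_Icc]
          refine ENNReal.ofReal_le_ofReal ?_
          have h1 := le_max_left l 0
          rw [hc, hl] at *
          linarith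
        exact ENNReal.toReal_le_of_le_ofReal (by positivity) hvol
end BoostAux

/-- **boosting TV ergodicity to Rényi-infinity.** If `P` is a Markov kernel
reversible with respect to `π` and the essential supremum over `x` of `‖δₓ Pᵏ − π‖_TV` is at most
`ε`, then for any initial `ν ≪ π`,
`‖d(νPᵏ)/dπ − 1‖_{L^∞(π)} ≤ 2 ‖dν/dπ − 1‖_{L^∞(π)} · ε`. -/
theorem boosting_to_renyi_infinity {α : Type*} [MeasurableSpace α]
    (P : ProbabilityTheory.Kernel α α) [ProbabilityTheory.IsMarkovKernel P]
    (π' : Measure α) [IsProbabilityMeasure π']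
    (hrev : ∀ A B : Set α, MeasurableSet A → MeasurableSet B →
      (∫⁻ x in A, P x B ∂π') = ∫⁻ x in B, P x A ∂π')
    (ν : Measure α) [IsProbabilityMeasure ν] (hac : ν ≪ π')
    (k : ℕ) (ε : ℝ) (hε : 0 ≤ ε)
    (hk : ∀ᵐ x ∂π',
      tvDist ((fun μ : Measure α => μ.bind (fun a => P a))^[k] (Measure.dirac x)) π' ≤ ε) :
    essSup (fun x =>
        ENNReal.ofReal
          |((((fun μ : Measure α => μ.bind (fun a => P a))^[k] ν).rnDeriv π') x).toReal - 1|) π'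
      ≤ 2 * essSup (fun x => ENNReal.ofReal |((ν.rnDeriv π') x).toReal - 1|) π' *
          ENNReal.ofReal ε := by
  classical
  have hiter := BoostAux.iterate_bind P k ν
  have hsym := BoostAux.sym_kpow π' P hrev k
  have hdir : ∀ x : α,
      (fun μ : Measure α => μ.bind (fun a => P a))^[k] (Measure.dirac x)
        = BoostAux.kpow P k x := by
    intro x
    rw [BoostAux.iterate_bind P k, Measure.dirac_bind (BoostAux.kpow P k).measurable]
  have hK : ∀ᵐ x ∂π', ∀ A : Set α, MeasurableSet A →
      |((BoostAux.kpow P k x : Measure α) A).toReal - (π' A).toReal| ≤ ε := by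
    filter_upwards [hk] with x hx
    rw [hdir x] at hx
    exact BoostAux.tv_sets hx
  set f : α → ℝ≥0∞ := ν.rnDeriv π' with hf
  have hfm : Measurable f := Measure.measurable_rnDeriv ν π'
  have hν : π'.withDensity f = ν := Measure.withDensity_rnDeriv_eq ν π' hac
  set M := essSup (fun x => ENNReal.ofReal |(f x).toReal - 1|) π' with hM
  have key : ∀ φ : α → ℝ≥0∞, Measurable φ → π'.withDensity φ = ν →
      ((fun μ : Measure α => μ.bind (fun a => P a))^[k] ν).rnDeriv π'
        =ᵐ[π'] fun x => ∫⁻ y, φ y ∂(BoostAux.kpow P k x) := by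
    intro φ hφ hφν
    have heq : (fun μ : Measure α => μ.bind (fun a => P a))^[k] ν
        = π'.withDensity fun x => ∫⁻ y, φ y ∂(BoostAux.kpow P k x) := by
      rw [hiter, ← hφν, BoostAux.bind_withDensity (BoostAux.kpow P k) π' hsym hφ]
    rw [heq]
    exact Measure.rnDeriv_withDensity π' (hφ.lintegral_kernel (κ := BoostAux.kpow P k))
  rcases eq_or_lt_of_le hε with hε0 | hεpos
  · -- ε = 0 : a.e. `kpow P k x = π'`
    have hKx : ∀ᵐ x ∂π', (BoostAux.kpow P k x : Measure α) = π' := by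
      filter_upwards [hK] with x hx
      ext A hA
      have h1 := hx A hA
      rw [← hε0] at h1
      have h2 : ((BoostAux.kpow P k x : Measure α) A).toReal = (π' A).toReal :=
        sub_eq_zero.mp (abs_nonpos_iff.mp h1)
      exact (ENNReal.toReal_eq_toReal_iff' (measure_ne_top _ _) (measure_ne_top _ _)).mp h2
    have hone : ∀ᵐ x ∂π',
        ((fun μ : Measure α => μ.bind (fun a => P a))^[k] ν).rnDeriv π' x = 1 := by
      filter_upwards [key f hfm hν, hKx] with x h1 h2
      rw [h1, h2]
      have h3 : ∫⁻ y, f y ∂π' = (π'.withDensity f) Set.univ := by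
        rw [withDensity_apply _ MeasurableSet.univ, setLIntegral_univ]
      rw [h3, hν]
      exact measure_univ
    have hzero : essSup (fun x =>
        ENNReal.ofReal
          |((((fun μ : Measure α => μ.bind (fun a => P a))^[k] ν).rnDeriv π') x).toReal - 1|) π'
        = 0 := by
      have := essSup_congr_ae (μ := π')
        (f := fun x => ENNReal.ofReal
          |((((fun μ : Measure α => μ.bind (fun a => P a))^[k] ν).rnDeriv π') x).toReal - 1|)
        (g := fun _ => (0 : ℝ≥0∞)) ?_
      · rw [this]
        exact essSup_const _ (IsProbabilityMeasure.ne_zero π')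
      · filter_upwards [hone] with x hx
        rw [hx]
        simp
    rw [hzero]
    exact zero_le
  · by_cases hMtop : M = ⊤
    · have hRHS : 2 * M * ENNReal.ofReal ε = ⊤ := by
        rw [hMtop, ENNReal.mul_top (by norm_num), ENNReal.top_mul]
        simp only [ne_eq, ENNReal.ofReal_eq_zero, not_le]
        exact hεpos
      rw [hRHS]
      exact le_top
    · set m : ℝ := M.toReal with hm'
      have hm : 0 ≤ m := ENNReal.toReal_nonneg
      have hMof : ENNReal.ofReal m = M := ENNReal.ofReal_toReal hMtop
      have haef : ∀ᵐ x ∂π', |(f x).toReal - 1| ≤ m := by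
        filter_upwards [ENNReal.ae_le_essSup (μ := π') (fun x => ENNReal.ofReal |(f x).toReal - 1|)]
          with x hx
        rw [← hM, ← hMof] at hx
        exact (ENNReal.ofReal_le_ofReal_iff hm).mp hx
      set l : ℝ := max (1 - m) 0 with hl
      set h : α → ℝ := fun x => min (max ((f x).toReal) l) (1 + m) with hh
      have hhmeas : Measurable h := (hfm.ennreal_toReal.max measurable_const).min measurable_const
      have hh0 : ∀ x, 0 ≤ h x := fun x =>
        le_min ((le_max_right _ _).trans (le_max_right _ _)) (by linarith)
      have hhub : ∀ x, h x ≤ 1 + m := fun x => min_le_right _ _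
      have hhlb : ∀ x, 1 - m ≤ h x := fun x =>
        le_min ((le_max_left _ _).trans (le_max_right _ _)) (by linarith)
      have hfh : (fun x => ENNReal.ofReal (h x)) =ᵐ[π'] f := by
        filter_upwards [haef, Measure.rnDeriv_lt_top ν π'] with x h1 h2
        have habs := abs_le.mp h1
        have h3 : l ≤ (f x).toReal := max_le (by linarith [habs.1]) ENNReal.toReal_nonneg
        have h4 : (f x).toReal ≤ 1 + m := by linarith [habs.2]
        have h5 : h x = (f x).toReal := by
          rw [hh]
          simp only
          rw [max_eq_left h3, min_eq_left h4]
        rw [h5, ENNReal.ofReal_toReal h2.ne]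
      have hνφ : π'.withDensity (fun x => ENNReal.ofReal (h x)) = ν := by
        rw [withDensity_congr_ae hfh, hν]
      have hint1 : ∫⁻ y, ENNReal.ofReal (h y) ∂π' = 1 := by
        have h3 : ∫⁻ y, ENNReal.ofReal (h y) ∂π'
            = (π'.withDensity fun x => ENNReal.ofReal (h x)) Set.univ := by
          rw [withDensity_apply _ MeasurableSet.univ, setLIntegral_univ]
        rw [h3, hνφ]
        exact measure_univ
      have hbound : ∀ᵐ x ∂π',
          ENNReal.ofReal
            |((((fun μ : Measure α => μ.bind (fun a => P a))^[k] ν).rnDeriv π') x).toReal - 1|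
            ≤ ENNReal.ofReal (2 * m * ε) := by
        filter_upwards [key _ hhmeas.ennreal_ofReal hνφ, hK] with x h1 h2
        rw [h1]
        refine ENNReal.ofReal_le_ofReal ?_
        have h3 := BoostAux.abs_toReal_lintegral_sub_le (BoostAux.kpow P k x) π'
          hhmeas hm hε hh0 hhub hhlb h2
        rw [hint1] at h3
        simpa using h3
      calc essSup (fun x =>
            ENNReal.ofReal
              |((((fun μ : Measure α => μ.bind (fun a => P a))^[k] ν).rnDeriv π') x).toReal - 1|)
            π'
          ≤ essSup (fun _ => ENNReal.ofReal (2 * m * ε)) π' := essSup_mono_ae hbound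
        _ = ENNReal.ofReal (2 * m * ε) := essSup_const _ (IsProbabilityMeasure.ne_zero π')
        _ = 2 * M * ENNReal.ofReal ε := by
            rw [ENNReal.ofReal_mul (by positivity), ENNReal.ofReal_mul (by norm_num), hMof]
            norm_num
end
end

section
/- Let Z₁, …, Z_p be generated by a (time-inhomogeneous) Markov chain. Then ‖law(Z₁,…,Z_p) − law(Z₁,…,Z_{p−1}) ⊗ law(Z_p)‖_TV = ‖law(Z_{p−1}, Z_p) − law(Z_{p−1}) ⊗ law(Z_p)‖_TV. -/
open MeasureTheory Set
open scoped ENNReal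

noncomputable section

namespace MarkovTVAux

open ProbabilityTheory

variable {γ δ : Type*} [MeasurableSpace γ] [MeasurableSpace δ]

/-- Sets that are finite unions of rectangles whose second sides form a partition. -/
def Good (A : Set (γ × δ)) : Prop :=
  ∃ (ι : Type) (_ : Fintype ι) (V : ι → Set γ) (E : ι → Set δ),
    (∀ i, MeasurableSet (V i)) ∧ (∀ i, MeasurableSet (E i)) ∧
    Pairwise (Function.onFun Disjoint E) ∧ (⋃ i, E i) = univ ∧
    A = ⋃ i, (V i) ×ˢ (E i)

theorem Good.measurableSet {A : Set (γ × δ)} (hA : Good A) : MeasurableSet A := by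
  obtain ⟨ι, hι, V, E, hV, hE, -, -, rfl⟩ := hA
  exact MeasurableSet.iUnion fun i => (hV i).prod (hE i)

theorem good_empty : Good (∅ : Set (γ × δ)) := by
  refine ⟨PUnit, inferInstance, fun _ => ∅, fun _ => univ, fun _ => .empty,
    fun _ => .univ, Subsingleton.pairwise, iUnion_const _, by simp⟩

theorem good_rect {U : Set γ} {F : Set δ} (hU : MeasurableSet U) (hF : MeasurableSet F) :
    Good (U ×ˢ F) := by
  refine ⟨Bool, inferInstance, fun b => bif b then U else ∅, fun b => bif b then F else Fᶜ,
    ?_, ?_, ?_, ?_, ?_⟩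
  · rintro (_|_) <;> simp [hU]
  · rintro (_|_) <;> simp [hF, hF.compl]
  · rintro (_|_) (_|_) h <;> simp_all [Function.onFun, disjoint_compl_left, disjoint_compl_right]
  · ext y; rcases Classical.em (y ∈ F) with h | h <;> simp [h]
  · ext ⟨p, y⟩
    constructor
    · rintro ⟨hp, hy⟩
      exact mem_iUnion.2 ⟨true, by simpa using ⟨hp, hy⟩⟩
    · intro h
      rcases mem_iUnion.1 h with ⟨(_|_), hb⟩ <;> simp_all

theorem Good.compl {A : Set (γ × δ)} (hA : Good A) : Good Aᶜ := by
  obtain ⟨ι, hι, V, E, hV, hE, hdisj, hcov, rfl⟩ := hA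
  refine ⟨ι, hι, fun i => (V i)ᶜ, E, fun i => (hV i).compl, hE, hdisj, hcov, ?_⟩
  ext ⟨p, y⟩
  obtain ⟨i₀, hi₀⟩ : ∃ i, y ∈ E i := by
    have : (p, y).2 ∈ (⋃ i, E i) := hcov ▸ mem_univ _
    exact mem_iUnion.1 this
  have huniq : ∀ i, y ∈ E i → i = i₀ := by
    intro i hi
    by_contra hne
    exact (hdisj hne).le_bot ⟨hi, hi₀⟩
  simp only [mem_compl_iff, mem_iUnion, mem_prod]
  constructor
  · intro h
    exact ⟨i₀, fun hp => h ⟨i₀, hp, hi₀⟩, hi₀⟩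
  · rintro ⟨i, hpc, hyi⟩ ⟨j, hpj, hyj⟩
    rw [huniq i hyi] at hpc
    rw [huniq j hyj] at hpj
    exact hpc hpj

theorem Good.union {A B : Set (γ × δ)} (hA : Good A) (hB : Good B) : Good (A ∪ B) := by
  obtain ⟨ι, hι, V, E, hV, hE, hdisj, hcov, rfl⟩ := hA
  obtain ⟨ι', hι', V', E', hV', hE', hdisj', hcov', rfl⟩ := hB
  refine ⟨ι × ι', inferInstance, fun q => V q.1 ∪ V' q.2, fun q => E q.1 ∩ E' q.2,
    fun q => (hV q.1).union (hV' q.2), fun q => (hE q.1).inter (hE' q.2), ?_, ?_, ?_⟩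
  · rintro ⟨i, j⟩ ⟨k, l⟩ hne
    rcases Classical.em (i = k) with rfl | hik
    · have hjl : j ≠ l := by simpa using hne
      exact ((hdisj' hjl).mono inf_le_right inf_le_right)
    · exact ((hdisj hik).mono inf_le_left inf_le_left)
  · ext y
    have h1 : ∃ i, y ∈ E i := mem_iUnion.1 (hcov ▸ mem_univ y)
    have h2 : ∃ j, y ∈ E' j := mem_iUnion.1 (hcov' ▸ mem_univ y)
    obtain ⟨i, hi⟩ := h1; obtain ⟨j, hj⟩ := h2
    simp only [mem_iUnion, mem_inter_iff, mem_univ, iff_true]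
    exact ⟨⟨i, j⟩, hi, hj⟩
  · ext ⟨p, y⟩
    simp only [mem_union, mem_iUnion, mem_prod, mem_inter_iff]
    constructor
    · rintro (⟨i, hp, hy⟩ | ⟨j, hp, hy⟩)
      · obtain ⟨j, hj⟩ := mem_iUnion.1 (hcov' ▸ mem_univ y)
        exact ⟨⟨i, j⟩, Or.inl hp, hy, hj⟩
      · obtain ⟨i, hi⟩ := mem_iUnion.1 (hcov ▸ mem_univ y)
        exact ⟨⟨i, j⟩, Or.inr hp, hi, hy⟩
    · rintro ⟨⟨i, j⟩, (hp | hp), hy, hy'⟩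
      · exact Or.inl ⟨i, hp, hy⟩
      · exact Or.inr ⟨j, hp, hy'⟩


theorem good_biUnion (s : Finset ℕ) (g : ℕ → Set (γ × δ)) (h : ∀ n ∈ s, Good (g n)) :
    Good (⋃ n ∈ s, g n) := by
  classical
  induction s using Finset.induction_on with
  | empty => simpa using good_empty
  | insert _ _ hns ih =>
    rw [Finset.set_biUnion_insert]
    exact (h _ (Finset.mem_insert_self _ _)).union
      (ih fun n hn => h n (Finset.mem_insert_of_mem hn))

theorem good_approx (m : Measure (γ × δ)) [IsFiniteMeasure m] :
    ∀ ⦃A : Set (γ × δ)⦄, MeasurableSet A → ∀ ε : ℝ≥0∞, 0 < ε →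
      ∃ A', Good A' ∧ m (symmDiff A A') < ε := by
  refine MeasurableSpace.induction_on_inter (C := fun A _ => ∀ ε : ℝ≥0∞, 0 < ε → ∃ A', Good A' ∧ m (symmDiff A A') < ε) generateFrom_prod.symm isPiSystem_prod ?_ ?_ ?_ ?_
  · intro ε hε
    exact ⟨∅, good_empty, by simpa [symmDiff_self] using hε⟩
  · rintro t ⟨U, hU, F, hF, rfl⟩ ε hε
    exact ⟨U ×ˢ F, good_rect hU hF, by simpa [symmDiff_self] using hε⟩
  · intro t _ iht ε hε
    obtain ⟨A', hA', h⟩ := iht ε hε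
    exact ⟨A'ᶜ, hA'.compl, by rwa [compl_symmDiff_compl]⟩
  · intro f hfd hfm ihf ε hε
    rcases eq_top_or_lt_top ε with rfl | hεtop
    · exact ⟨∅, good_empty, measure_lt_top m _⟩
    have hhalf : (0 : ℝ≥0∞) < ε / 2 := ENNReal.half_pos hε.ne'
    have hhalftop : ε / 2 ≠ ∞ := (ENNReal.div_lt_top hεtop.ne (by norm_num)).ne
    have hsum : ∑' n, m (f n) ≠ ∞ := by
      rw [← measure_iUnion hfd hfm]
      exact (measure_lt_top m _).ne
    obtain ⟨N, hN⟩ := ((ENNReal.tendsto_sum_nat_add (fun n => m (f n)) hsum).eventually_lt_const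
      hhalf).exists
    rcases Nat.eq_zero_or_pos N with rfl | hNpos
    · refine ⟨∅, good_empty, ?_⟩
      have h1 : m (⋃ i, f i) ≤ ∑' i, m (f i) := measure_iUnion_le f
      have h2 : (∑' i, m (f i)) < ε / 2 := hN
      calc m (symmDiff (⋃ i, f i) ∅) = m (⋃ i, f i) := by rw [← Set.bot_eq_empty, symmDiff_bot]
        _ < ε / 2 := lt_of_le_of_lt h1 h2
        _ ≤ ε := ENNReal.half_le_self
    · set δ := ε / 2 / N with hδdef
      have hδ : 0 < δ := ENNReal.div_pos hhalf.ne' (ENNReal.natCast_ne_top N)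
      choose g hg1 hg2 using fun n => ihf n δ hδ
      set U := ⋃ i, f i with hU
      set U₁ := ⋃ n ∈ Finset.range N, f n with hU₁
      set U₂ := ⋃ n ∈ Finset.range N, g n with hU₂
      refine ⟨U₂, good_biUnion _ _ fun n _ => hg1 n, ?_⟩
      have hU₁U : U₁ ⊆ U := by
        intro x hx
        obtain ⟨n, -, hn⟩ := mem_iUnion₂.1 hx
        exact mem_iUnion.2 ⟨n, hn⟩
      have hsub1 : symmDiff U U₂ ⊆ (U \ U₁) ∪ symmDiff U₁ U₂ := by
        refine le_trans (symmDiff_triangle U U₁ U₂) ?_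
        rw [symmDiff_of_ge hU₁U]
        exact le_rfl
      have hsub2 : symmDiff U₁ U₂ ⊆ ⋃ n ∈ Finset.range N, symmDiff (f n) (g n) := by
        rintro x hx
        rw [Set.mem_symmDiff] at hx
        rcases hx with ⟨hx1, hx2⟩ | ⟨hx1, hx2⟩
        · obtain ⟨n, hnr, hfn⟩ := mem_iUnion₂.1 hx1
          have hng : x ∉ g n := fun hgx => hx2 (mem_iUnion₂.2 ⟨n, hnr, hgx⟩)
          exact mem_iUnion₂.2 ⟨n, hnr, Set.mem_symmDiff.2 (Or.inl ⟨hfn, hng⟩)⟩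
        · obtain ⟨n, hnr, hgn⟩ := mem_iUnion₂.1 hx1
          have hnf : x ∉ f n := fun hfx => hx2 (mem_iUnion₂.2 ⟨n, hnr, hfx⟩)
          exact mem_iUnion₂.2 ⟨n, hnr, Set.mem_symmDiff.2 (Or.inr ⟨hgn, hnf⟩)⟩
      have hsub3 : U \ U₁ ⊆ ⋃ i, f (i + N) := by
        rintro x ⟨hx1, hx2⟩
        obtain ⟨n, hn⟩ := mem_iUnion.1 hx1
        have hnN : N ≤ n := by
          by_contra h
          exact hx2 (mem_iUnion₂.2 ⟨n, Finset.mem_range.2 (lt_of_not_ge h), hn⟩)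
        exact mem_iUnion.2 ⟨n - N, by rwa [Nat.sub_add_cancel hnN]⟩
      have hSb : ∑ n ∈ Finset.range N, m (symmDiff (f n) (g n)) ≤ ε / 2 := by
        calc ∑ n ∈ Finset.range N, m (symmDiff (f n) (g n))
            ≤ ∑ _n ∈ Finset.range N, δ := Finset.sum_le_sum fun n _ => (hg2 n).le
          _ = N * δ := by rw [Finset.sum_const, Finset.card_range, nsmul_eq_mul]
          _ ≤ ε / 2 := ENNReal.mul_div_le
      calc m (symmDiff U U₂) ≤ m ((U \ U₁) ∪ symmDiff U₁ U₂) := measure_mono hsub1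
        _ ≤ m (U \ U₁) + m (symmDiff U₁ U₂) := measure_union_le _ _
        _ ≤ m (⋃ i, f (i + N)) + m (⋃ n ∈ Finset.range N, symmDiff (f n) (g n)) :=
            add_le_add (measure_mono hsub3) (measure_mono hsub2)
        _ ≤ (∑' i, m (f (i + N))) + ∑ n ∈ Finset.range N, m (symmDiff (f n) (g n)) :=
            add_le_add (measure_iUnion_le _) (measure_biUnion_finset_le _ _)
        _ ≤ (∑' i, m (f (i + N))) + ε / 2 := add_le_add le_rfl hSb
        _ < ε / 2 + ε / 2 := by exact ENNReal.add_lt_add_right hhalftop hN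
        _ = ε := ENNReal.add_halves ε


theorem tv_bddAbove {X : Type*} [MeasurableSpace X] (μ ν : Measure X) [IsFiniteMeasure μ]
    [IsFiniteMeasure ν] :
    BddAbove (Set.range fun A : {A : Set X // MeasurableSet A} =>
      |(μ A.1).toReal - (ν A.1).toReal|) := by
  refine ⟨(μ univ).toReal + (ν univ).toReal, ?_⟩
  rintro _ ⟨A, rfl⟩
  have h1 : (μ A.1).toReal ≤ (μ univ).toReal :=
    ENNReal.toReal_mono (measure_ne_top _ _) (measure_mono (subset_univ _))
  have h2 : (ν A.1).toReal ≤ (ν univ).toReal :=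
    ENNReal.toReal_mono (measure_ne_top _ _) (measure_mono (subset_univ _))
  have h3 : (0:ℝ) ≤ (μ A.1).toReal := ENNReal.toReal_nonneg
  have h4 : (0:ℝ) ≤ (ν A.1).toReal := ENNReal.toReal_nonneg
  rw [abs_le]
  constructor <;> nlinarith

theorem core {β α : Type*} [MeasurableSpace β] [MeasurableSpace α]
    (μWX : Measure (β × α)) [IsProbabilityMeasure μWX]
    (κ : Kernel α α) [IsMarkovKernel κ]
    (lam : Measure α) [IsProbabilityMeasure lam]
    {A : Set ((β × α) × α)} (hA : Good A) :
    ((μWX.compProd (κ.comap Prod.snd measurable_snd)) A).toReal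
        - ((μWX.prod lam) A).toReal
      ≤ ⨆ B : {B : Set (α × α) // MeasurableSet B},
          |(((μWX.compProd (κ.comap Prod.snd measurable_snd)).map
              (fun q : (β × α) × α => (q.1.2, q.2))) B.1).toReal
            - (((μWX.map Prod.snd).prod lam) B.1).toReal| := by
  obtain ⟨ι, hι, V, E, hV, hE, hdisj, hcov, rfl⟩ := hA
  haveI := hι
  set η := κ.comap Prod.snd measurable_snd with hη
  set μ₁ := μWX.compProd η with hμ₁
  set μ₂ := μWX.prod lam with hμ₂
  set gg := fun q : (β × α) × α => (q.1.2, q.2) with hgg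
  have hg : Measurable gg := (measurable_snd.comp measurable_fst).prodMk measurable_snd
  haveI : IsProbabilityMeasure μ₁ := by infer_instance
  haveI : IsProbabilityMeasure (μ₁.map gg) := Measure.isProbabilityMeasure_map hg.aemeasurable
  haveI : IsProbabilityMeasure (μWX.map Prod.snd) :=
    Measure.isProbabilityMeasure_map measurable_snd.aemeasurable
  set G : ι → Set α := fun i => {x | lam (E i) < κ x (E i)} with hGdef
  have hG : ∀ i, MeasurableSet (G i) :=
    fun i => measurableSet_lt measurable_const (κ.measurable_coe (hE i))
  set B := ⋃ i, G i ×ˢ E i with hBdef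
  have hB : MeasurableSet B := MeasurableSet.iUnion fun i => (hG i).prod (hE i)
  -- disjointness of the pieces
  have hd1 : Pairwise (Function.onFun Disjoint fun i => V i ×ˢ E i) := by
    intro i j hij
    refine Set.disjoint_left.2 ?_
    rintro ⟨p, y⟩ ⟨-, hy⟩ ⟨-, hy'⟩
    exact (hdisj hij).le_bot ⟨hy, hy'⟩
  have hd2 : Pairwise (Function.onFun Disjoint fun i => G i ×ˢ E i) := by
    intro i j hij
    refine Set.disjoint_left.2 ?_
    rintro ⟨x, y⟩ ⟨-, hy⟩ ⟨-, hy'⟩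
    exact (hdisj hij).le_bot ⟨hy, hy'⟩
  -- slice computations
  have hslice : ∀ (i : ι) (s : Set (β × α)), MeasurableSet s →
      μ₁ (s ×ˢ E i) = ∫⁻ p in s, κ p.2 (E i) ∂μWX := by
    intro i s hs
    rw [hμ₁, Measure.compProd_apply_prod hs (hE i)]
    simp_rw [hη, Kernel.comap_apply]
  -- real versions
  set f : ι → β × α → ℝ := fun i p => (κ p.2 (E i)).toReal with hfdef
  set c : ι → ℝ := fun i => (lam (E i)).toReal with hcdef
  have hfm : ∀ i, Measurable (f i) :=
    fun i => ((κ.measurable_coe (hE i)).comp measurable_snd).ennreal_toReal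
  have hfint : ∀ i, Integrable (f i) μWX := by
    intro i
    refine Integrable.mono' (integrable_const 1) (hfm i).aestronglyMeasurable ?_
    refine ae_of_all _ fun p => ?_
    rw [Real.norm_eq_abs, abs_of_nonneg ENNReal.toReal_nonneg]
    simpa using ENNReal.toReal_mono ENNReal.one_ne_top (prob_le_one (μ := κ p.2))
  have htoReal : ∀ (i : ι) (s : Set (β × α)), MeasurableSet s →
      (μ₁ (s ×ˢ E i)).toReal = ∫ p in s, f i p ∂μWX := by
    intro i s hs
    rw [hslice i s hs, ← integral_toReal]
    · exact ((κ.measurable_coe (hE i)).comp measurable_snd).aemeasurable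
    · exact ae_of_all _ fun p => lt_of_le_of_lt prob_le_one ENNReal.one_lt_top
  have hconst : ∀ (i : ι) (s : Set (β × α)), MeasurableSet s →
      (μWX s * lam (E i)).toReal = ∫ _p in s, c i ∂μWX := by
    intro i s hs
    rw [setIntegral_const, ENNReal.toReal_mul, smul_eq_mul]
    rfl
  -- the W sets
  set W : ι → Set (β × α) := fun i => Prod.snd ⁻¹' (G i) with hWdef
  have hW : ∀ i, MeasurableSet (W i) := fun i => measurable_snd (hG i)
  have hWf : ∀ i p, p ∈ W i ↔ c i < f i p := by
    intro i p
    simp only [hWdef, mem_preimage, hGdef, mem_setOf_eq, hfdef, hcdef]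
    exact (ENNReal.toReal_lt_toReal (measure_ne_top lam _) (measure_ne_top (κ p.2) _)).symm
  -- per-index inequality on integrals
  have hkey : ∀ i, ∫ p in V i, (f i p - c i) ∂μWX ≤ ∫ p in W i, (f i p - c i) ∂μWX := by
    intro i
    have hint : Integrable (fun p => f i p - c i) μWX := (hfint i).sub (integrable_const _)
    have hsplit : ∫ p in (V i) ∩ (W i), (f i p - c i) ∂μWX
        + ∫ p in (V i) \ (W i), (f i p - c i) ∂μWX = ∫ p in V i, (f i p - c i) ∂μWX :=
      integral_inter_add_diff (hW i) hint.integrableOn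
    have h1 : ∫ p in (V i) \ (W i), (f i p - c i) ∂μWX ≤ 0 := by
      refine setIntegral_nonpos ((hV i).diff (hW i)) fun p hp => ?_
      have : ¬ (c i < f i p) := fun h => hp.2 ((hWf i p).2 h)
      linarith [not_lt.1 this]
    have h2 : ∫ p in (V i) ∩ (W i), (f i p - c i) ∂μWX
        ≤ ∫ p in W i, (f i p - c i) ∂μWX := by
      refine setIntegral_mono_set hint.integrableOn ?_ (HasSubset.Subset.eventuallyLE inter_subset_right)
      refine (ae_restrict_iff' (hW i)).2 (ae_of_all _ fun p hp => ?_)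
      have := (hWf i p).1 hp
      simp only [Pi.zero_apply]
      linarith
    linarith
  -- identify both sides of per-index inequality with measures
  have hpre : ∀ i, gg ⁻¹' (G i ×ˢ E i) = (W i) ×ˢ (E i) := fun i => rfl
  have ha' : ∀ i, ((μ₁.map gg) (G i ×ˢ E i)).toReal = ∫ p in W i, f i p ∂μWX := by
    intro i
    rw [Measure.map_apply hg ((hG i).prod (hE i)), hpre i, htoReal i _ (hW i)]
  have hb' : ∀ i, (((μWX.map Prod.snd).prod lam) (G i ×ˢ E i)).toReal
      = ∫ _p in W i, c i ∂μWX := by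
    intro i
    rw [Measure.prod_prod, Measure.map_apply measurable_snd (hG i), hconst i _ (hW i)]
  have ha : ∀ i, (μ₁ (V i ×ˢ E i)).toReal = ∫ p in V i, f i p ∂μWX :=
    fun i => htoReal i _ (hV i)
  have hb : ∀ i, (μ₂ (V i ×ˢ E i)).toReal = ∫ _p in V i, c i ∂μWX := by
    intro i
    rw [hμ₂, Measure.prod_prod, hconst i _ (hV i)]
  have key : ∀ i, (μ₁ (V i ×ˢ E i)).toReal - (μ₂ (V i ×ˢ E i)).toReal
      ≤ ((μ₁.map gg) (G i ×ˢ E i)).toReal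
        - (((μWX.map Prod.snd).prod lam) (G i ×ˢ E i)).toReal := by
    intro i
    rw [ha i, hb i, ha' i, hb' i,
      ← integral_sub (hfint i).integrableOn (integrable_const _).integrableOn,
      ← integral_sub (hfint i).integrableOn (integrable_const _).integrableOn]
    exact hkey i
  -- sum up
  have hsum1 : (μ₁ (⋃ i, V i ×ˢ E i)).toReal = ∑ i, (μ₁ (V i ×ˢ E i)).toReal := by
    rw [measure_iUnion hd1 fun i => (hV i).prod (hE i), tsum_fintype,
      ENNReal.toReal_sum fun i _ => measure_ne_top _ _]
  have hsum2 : (μ₂ (⋃ i, V i ×ˢ E i)).toReal = ∑ i, (μ₂ (V i ×ˢ E i)).toReal := by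
    rw [measure_iUnion hd1 fun i => (hV i).prod (hE i), tsum_fintype,
      ENNReal.toReal_sum fun i _ => measure_ne_top _ _]
  have hsum3 : ((μ₁.map gg) B).toReal = ∑ i, ((μ₁.map gg) (G i ×ˢ E i)).toReal := by
    rw [hBdef, measure_iUnion hd2 fun i => (hG i).prod (hE i), tsum_fintype,
      ENNReal.toReal_sum fun i _ => measure_ne_top _ _]
  have hsum4 : (((μWX.map Prod.snd).prod lam) B).toReal
      = ∑ i, (((μWX.map Prod.snd).prod lam) (G i ×ˢ E i)).toReal := by
    rw [hBdef, measure_iUnion hd2 fun i => (hG i).prod (hE i), tsum_fintype,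
      ENNReal.toReal_sum fun i _ => measure_ne_top _ _]
  calc (μ₁ (⋃ i, V i ×ˢ E i)).toReal - (μ₂ (⋃ i, V i ×ˢ E i)).toReal
      = ∑ i, ((μ₁ (V i ×ˢ E i)).toReal - (μ₂ (V i ×ˢ E i)).toReal) := by
        rw [hsum1, hsum2, Finset.sum_sub_distrib]
    _ ≤ ∑ i, (((μ₁.map gg) (G i ×ˢ E i)).toReal
          - (((μWX.map Prod.snd).prod lam) (G i ×ˢ E i)).toReal) :=
        Finset.sum_le_sum fun i _ => key i
    _ = ((μ₁.map gg) B).toReal - (((μWX.map Prod.snd).prod lam) B).toReal := by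
        rw [Finset.sum_sub_distrib, hsum3, hsum4]
    _ ≤ |((μ₁.map gg) B).toReal - (((μWX.map Prod.snd).prod lam) B).toReal| := le_abs_self _
    _ ≤ _ := le_ciSup (tv_bddAbove _ _) (⟨B, hB⟩ : {B : Set (α × α) // MeasurableSet B})


theorem abs_toReal_sub_le {X : Type*} [MeasurableSpace X] (m : Measure X) [IsFiniteMeasure m]
    (s t : Set X) : |(m s).toReal - (m t).toReal| ≤ (m (symmDiff s t)).toReal := by
  have hsub : ∀ u v : Set X, u ⊆ v ∪ symmDiff u v := by
    intro u v x hx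
    rcases Classical.em (x ∈ v) with h | h
    · exact Or.inl h
    · exact Or.inr (Set.mem_symmDiff.2 (Or.inl ⟨hx, h⟩))
  have key : ∀ u v : Set X, (m u).toReal ≤ (m v).toReal + (m (symmDiff u v)).toReal := by
    intro u v
    have h1 : m u ≤ m v + m (symmDiff u v) :=
      le_trans (measure_mono (hsub u v)) (measure_union_le _ _)
    have h2 := ENNReal.toReal_mono
      (ENNReal.add_ne_top.2 ⟨measure_ne_top _ _, measure_ne_top _ _⟩) h1
    rwa [ENNReal.toReal_add (measure_ne_top _ _) (measure_ne_top _ _)] at h2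
  have k1 := key s t
  have k2 := key t s
  rw [symmDiff_comm] at k2
  rw [abs_sub_le_iff]
  constructor <;> linarith


end MarkovTVAux

/-- If `((Z₁,…,Z_{p-2}), Z_{p-1}, Z_p)` has the Markov property — the joint law
`μ` is obtained from the law `μWX` of `(W, Z_{p-1})` (with `W = (Z₁,…,Z_{p-2})`) by composing with
a kernel `κ` depending only on `Z_{p-1}` — then
`‖law(Z₁,…,Z_p) − law(Z₁,…,Z_{p-1}) ⊗ law Z_p‖_TV
  = ‖law(Z_{p-1}, Z_p) − law Z_{p-1} ⊗ law Z_p‖_TV`. -/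
theorem markov_tv_factorization {β α : Type*} [MeasurableSpace β] [MeasurableSpace α]
    (μWX : Measure (β × α)) [IsProbabilityMeasure μWX]
    (κ : ProbabilityTheory.Kernel α α) [ProbabilityTheory.IsMarkovKernel κ]
    (μ : Measure ((β × α) × α))
    (hμ : μ = μWX.compProd (κ.comap Prod.snd measurable_snd)) :
    tvDist μ (μWX.prod (μ.map (fun q => q.2)))
      = tvDist (μ.map (fun q => (q.1.2, q.2)))
          ((μ.map (fun q => q.1.2)).prod (μ.map (fun q => q.2))) := by
  have hg : Measurable (fun q : (β × α) × α => (q.1.2, q.2)) :=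
    (measurable_snd.comp measurable_fst).prodMk measurable_snd
  subst hμ
  set η := κ.comap Prod.snd measurable_snd with hη
  set μ₁ := μWX.compProd η with hμ₁def
  haveI : IsProbabilityMeasure μ₁ := by rw [hμ₁def]; infer_instance
  set lam := μ₁.map (fun q : (β × α) × α => q.2) with hlam
  haveI : IsProbabilityMeasure lam :=
    Measure.isProbabilityMeasure_map measurable_snd.aemeasurable
  haveI : IsProbabilityMeasure (μWX.prod lam) := by infer_instance
  haveI : IsProbabilityMeasure (μ₁.map (fun q : (β × α) × α => (q.1.2, q.2))) :=
    Measure.isProbabilityMeasure_map hg.aemeasurable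
  haveI : IsProbabilityMeasure (μWX.map Prod.snd) :=
    Measure.isProbabilityMeasure_map measurable_snd.aemeasurable
  haveI hne1 : Nonempty {A : Set ((β × α) × α) // MeasurableSet A} := ⟨⟨∅, .empty⟩⟩
  haveI hne2 : Nonempty {A : Set (α × α) // MeasurableSet A} := ⟨⟨∅, .empty⟩⟩
  have hνX : μ₁.map (fun q : (β × α) × α => q.1.2) = μWX.map Prod.snd := by
    have hfun : (fun q : (β × α) × α => q.1.2) = Prod.snd ∘ Prod.fst := rfl
    rw [hfun, ← Measure.map_map measurable_snd measurable_fst,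
      show μ₁.map Prod.fst = μ₁.fst from rfl, hμ₁def, Measure.fst_compProd]
  have hmap2 : (μWX.map Prod.snd).prod lam
      = (μWX.prod lam).map (fun q : (β × α) × α => (q.1.2, q.2)) := by
    have h := Measure.map_prod_map μWX lam measurable_snd measurable_id
    rw [Measure.map_id] at h
    have hfun : (fun q : (β × α) × α => (q.1.2, q.2)) = Prod.map Prod.snd id := rfl
    rw [hfun]
    exact h
  rw [hνX]
  -- key upper bound
  have hkey : ∀ (A : Set ((β × α) × α)), MeasurableSet A →
      (μ₁ A).toReal - ((μWX.prod lam) A).toReal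
        ≤ tvDist (μ₁.map (fun q : (β × α) × α => (q.1.2, q.2)))
            ((μWX.map Prod.snd).prod lam) := by
    intro A hA
    refine le_of_forall_sub_le fun ε hε => ?_
    obtain ⟨A', hA', hsd⟩ := MarkovTVAux.good_approx (μ₁ + μWX.prod lam) hA (ENNReal.ofReal ε)
      (ENNReal.ofReal_pos.2 hε)
    have h1 := MarkovTVAux.abs_toReal_sub_le μ₁ A A'
    have h2 := MarkovTVAux.abs_toReal_sub_le (μWX.prod lam) A A'
    have h3 : (μ₁ (symmDiff A A')).toReal + ((μWX.prod lam) (symmDiff A A')).toReal < ε := by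
      have ht := ENNReal.toReal_lt_of_lt_ofReal hsd
      rwa [Measure.add_apply, ENNReal.toReal_add (measure_ne_top _ _) (measure_ne_top _ _)] at ht
    have hcore := MarkovTVAux.core μWX κ lam hA'
    rw [← hη, ← hμ₁def] at hcore
    have hS : ((μ₁ A').toReal - ((μWX.prod lam) A').toReal)
        ≤ tvDist (μ₁.map (fun q : (β × α) × α => (q.1.2, q.2)))
            ((μWX.map Prod.snd).prod lam) := hcore
    have h1' := abs_le.1 h1
    have h2' := abs_le.1 h2
    linarith [h1'.2, h2'.1]
  refine le_antisymm ?_ ?_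
  · -- LHS ≤ RHS
    refine ciSup_le fun As => ?_
    obtain ⟨A, hA⟩ := As
    have hcompl1 : (μ₁ A).toReal + (μ₁ Aᶜ).toReal = 1 := by
      have h := measure_add_measure_compl (μ := μ₁) hA
      rw [measure_univ] at h
      have := congrArg ENNReal.toReal h
      rwa [ENNReal.toReal_add (measure_ne_top _ _) (measure_ne_top _ _), ENNReal.toReal_one]
        at this
    have hcompl2 : ((μWX.prod lam) A).toReal + ((μWX.prod lam) Aᶜ).toReal = 1 := by
      have h := measure_add_measure_compl (μ := μWX.prod lam) hA
      rw [measure_univ] at h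
      have := congrArg ENNReal.toReal h
      rwa [ENNReal.toReal_add (measure_ne_top _ _) (measure_ne_top _ _), ENNReal.toReal_one]
        at this
    have k1 := hkey A hA
    have k2 := hkey Aᶜ hA.compl
    rw [abs_le]
    constructor <;> linarith
  · -- RHS ≤ LHS
    refine ciSup_le fun Bs => ?_
    obtain ⟨B, hB⟩ := Bs
    have e1 : ((μ₁.map (fun q : (β × α) × α => (q.1.2, q.2))) B)
        = μ₁ ((fun q : (β × α) × α => (q.1.2, q.2)) ⁻¹' B) := Measure.map_apply hg hB
    have e2 : (((μWX.map Prod.snd).prod lam) B)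
        = (μWX.prod lam) ((fun q : (β × α) × α => (q.1.2, q.2)) ⁻¹' B) := by
      rw [hmap2, Measure.map_apply hg hB]
    calc |((μ₁.map (fun q : (β × α) × α => (q.1.2, q.2))) B).toReal
          - (((μWX.map Prod.snd).prod lam) B).toReal|
        = |(μ₁ ((fun q : (β × α) × α => (q.1.2, q.2)) ⁻¹' B)).toReal
            - ((μWX.prod lam) ((fun q : (β × α) × α => (q.1.2, q.2)) ⁻¹' B)).toReal| := by
          rw [e1, e2]
      _ ≤ tvDist μ₁ (μWX.prod lam) :=
          le_ciSup (MarkovTVAux.tv_bddAbove μ₁ (μWX.prod lam)) (⟨_, hB.preimage hg⟩ :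
            {A : Set ((β × α) × α) // MeasurableSet A})
end
end
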